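/- arXiv:2203.00681 — 3 statements merged into one kernel-verified Lean document; each statement's English description precedes it below -/
import Mathlib

section
/- There exist constants 0 < c ≤ C such that for all integers n ≥ 3 and k ≥ 2, the smallest positive eigenvalue of the Laplacian of the ring-of-cliques graph satisfies c/(n²k) ≤ λ_min^+(L(G_RC(n,k))) ≤ C/(n²k). -/
open Matrix

/-- The set of (real) eigenvalues of a matrix. -/
def eigSet {N : Type*} [Fintype N] (A : Matrix N N ℝ) : Set ℝ :=
  {μ | ∃ x : N → ℝ, x ≠ 0 ∧ A.mulVec x = μ • x}

/-- The largest eigenvalue of a matrix. -/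
noncomputable def lamMax {N : Type*} [Fintype N] (A : Matrix N N ℝ) : ℝ :=
  sSup (eigSet A)

/-- The smallest positive eigenvalue of a matrix. -/
noncomputable def lamMinPos {N : Type*} [Fintype N] (A : Matrix N N ℝ) : ℝ :=
  sInf {μ ∈ eigSet A | 0 < μ}

/-- The condition number `χ(A) = λ_max(A) / λ_min^+(A)`. -/
noncomputable def chi {N : Type*} [Fintype N] (A : Matrix N N ℝ) : ℝ :=
  lamMax A / lamMinPos A

/-- The ring-of-cliques graph `G_RC(n,k)`: `n` cliques of size `k`, whose `0`-th
vertices are connected in a ring. Vertex `(i, a)` is adjacent to `(j, b)` iff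
either `i = j` and `a ≠ b`, or `a = b = 0` and `j ≡ i ± 1 (mod n)`. -/
def ringClique (n k : ℕ) : SimpleGraph (Fin n × Fin k) where
  Adj v w := v ≠ w ∧ (v.1 = w.1 ∨
    (v.2.val = 0 ∧ w.2.val = 0 ∧
      (w.1.val = (v.1.val + 1) % n ∨ v.1.val = (w.1.val + 1) % n)))
  symm := ⟨by
    rintro v w ⟨hne, h⟩
    refine ⟨fun h' => hne h'.symm, ?_⟩
    rcases h with h | ⟨h1, h2, h3⟩
    · exact Or.inl h.symm
    · exact Or.inr ⟨h2, h1, h3.symm⟩⟩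
  loopless := ⟨fun v h => h.1 rfl⟩

instance (n k : ℕ) : DecidableRel (ringClique n k).Adj := fun v w =>
  decidable_of_iff (v ≠ w ∧ (v.1 = w.1 ∨
    (v.2.val = 0 ∧ w.2.val = 0 ∧
      (w.1.val = (v.1.val + 1) % n ∨ v.1.val = (w.1.val + 1) % n)))) Iff.rfl


namespace RCaux
open Finset

/-- cyclic successor -/
def isucc {n : ℕ} (i : Fin n) : Fin n := ⟨(i.val + 1) % n, Nat.mod_lt _ i.pos⟩

/-- cyclic predecessor -/
def ipred {n : ℕ} (i : Fin n) : Fin n := ⟨(i.val + n - 1) % n, Nat.mod_lt _ i.pos⟩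

variable {n : ℕ}

lemma isucc_val (i : Fin n) : (isucc i).val = (i.val + 1) % n := rfl
lemma ipred_val (i : Fin n) : (ipred i).val = (i.val + n - 1) % n := rfl

lemma isucc_ne (hn : 2 ≤ n) (i : Fin n) : isucc i ≠ i := by
  intro h
  have hv : (i.val + 1) % n = i.val := congrArg Fin.val h
  have hi := i.isLt
  rcases Nat.lt_or_ge (i.val + 1) n with h1 | h1
  · rw [Nat.mod_eq_of_lt h1] at hv; omega
  · have : i.val + 1 = n := by omega
    rw [this, Nat.mod_self] at hv; omega

lemma ipred_ne (hn : 2 ≤ n) (i : Fin n) : ipred i ≠ i := by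
  intro h
  have hv : (i.val + n - 1) % n = i.val := congrArg Fin.val h
  have hi := i.isLt
  rcases Nat.eq_zero_or_pos i.val with h0 | h0
  · rw [h0] at hv
    rw [show 0 + n - 1 = n - 1 by omega, Nat.mod_eq_of_lt (by omega)] at hv
    omega
  · rw [show i.val + n - 1 = (i.val - 1) + n by omega, Nat.add_mod_right,
      Nat.mod_eq_of_lt (by omega)] at hv
    omega

lemma isucc_ne_ipred (hn : 3 ≤ n) (i : Fin n) : isucc i ≠ ipred i := by
  intro h
  have hv : (i.val + 1) % n = (i.val + n - 1) % n := congrArg Fin.val h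
  have hi := i.isLt
  rcases Nat.lt_or_ge (i.val + 1) n with h1 | h1
  · rw [Nat.mod_eq_of_lt h1] at hv
    rcases Nat.eq_zero_or_pos i.val with h0 | h0
    · rw [h0, show 0 + n - 1 = n - 1 by omega, Nat.mod_eq_of_lt (by omega)] at hv; omega
    · rw [show i.val + n - 1 = (i.val - 1) + n by omega, Nat.add_mod_right,
        Nat.mod_eq_of_lt (by omega)] at hv; omega
  · have h2 : i.val + 1 = n := by omega
    rw [h2, Nat.mod_self] at hv
    rw [show i.val + n - 1 = (n - 2) + n by omega, Nat.add_mod_right,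
      Nat.mod_eq_of_lt (by omega)] at hv
    omega

lemma succ_eq_iff (i j : Fin n) : j.val = (i.val + 1) % n ↔ j = isucc i := by
  rw [Fin.ext_iff, isucc_val]

lemma pred_eq_iff (hn : 2 ≤ n) (i j : Fin n) : i.val = (j.val + 1) % n ↔ j = ipred i := by
  have hi := i.isLt
  have hj := j.isLt
  rw [Fin.ext_iff, ipred_val]
  constructor
  · intro h
    rcases Nat.lt_or_ge (j.val + 1) n with h1 | h1
    · rw [Nat.mod_eq_of_lt h1] at h
      rw [show i.val + n - 1 = j.val + n by omega, Nat.add_mod_right, Nat.mod_eq_of_lt hj]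
    · have h2 : j.val + 1 = n := by omega
      rw [h2, Nat.mod_self] at h
      rw [h, show 0 + n - 1 = n - 1 by omega, Nat.mod_eq_of_lt (by omega)]
      omega
  · intro h
    rcases Nat.eq_zero_or_pos i.val with h0 | h0
    · rw [h0, show 0 + n - 1 = n - 1 by omega, Nat.mod_eq_of_lt (by omega)] at h
      rw [h, show n - 1 + 1 = n by omega, Nat.mod_self]
      omega
    · rw [show i.val + n - 1 = (i.val - 1) + n by omega, Nat.add_mod_right,
        Nat.mod_eq_of_lt (by omega)] at h
      rw [h, show i.val - 1 + 1 = i.val by omega, Nat.mod_eq_of_lt hi]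

lemma ipred_isucc (i : Fin n) : ipred (isucc i) = i := by
  have hi := i.isLt
  have hn := i.pos
  apply Fin.ext
  rw [ipred_val, isucc_val]
  rcases Nat.lt_or_ge (i.val + 1) n with h1 | h1
  · rw [Nat.mod_eq_of_lt h1, show i.val + 1 + n - 1 = i.val + n by omega,
      Nat.add_mod_right, Nat.mod_eq_of_lt hi]
  · have h2 : i.val + 1 = n := by omega
    rw [h2, Nat.mod_self, show 0 + n - 1 = n - 1 by omega, Nat.mod_eq_of_lt (by omega)]
    omega

lemma isucc_ipred (hn : 1 ≤ n) (i : Fin n) : isucc (ipred i) = i := by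
  have hi := i.isLt
  apply Fin.ext
  rw [isucc_val, ipred_val]
  rcases Nat.eq_zero_or_pos i.val with h0 | h0
  · rw [h0, show 0 + n - 1 = n - 1 by omega, Nat.mod_eq_of_lt (show n - 1 < n by omega),
      show n - 1 + 1 = n by omega, Nat.mod_self]
  · rw [show i.val + n - 1 = (i.val - 1) + n by omega, Nat.add_mod_right,
      Nat.mod_eq_of_lt (show i.val - 1 < n by omega), show i.val - 1 + 1 = i.val by omega,
      Nat.mod_eq_of_lt hi]

lemma isucc_bijective (hn : 1 ≤ n) : Function.Bijective (isucc : Fin n → Fin n) :=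
  Function.bijective_iff_has_inverse.2 ⟨ipred, ipred_isucc, isucc_ipred hn⟩



variable {k : ℕ}

lemma adj_nonhub (hn : 3 ≤ n) {i : Fin n} {a : Fin k} (ha : a.val ≠ 0) (j : Fin n) (b : Fin k) :
    (ringClique n k).Adj (i, a) (j, b) ↔ j = i ∧ b ≠ a := by
  constructor
  · rintro ⟨hne, h | ⟨h1, -, -⟩⟩
    · exact ⟨h.symm, fun hb => hne (Prod.ext h hb.symm)⟩
    · exact absurd h1 ha
  · rintro ⟨rfl, hb⟩
    exact ⟨fun h => hb (congrArg Prod.snd h).symm, Or.inl rfl⟩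

lemma adj_hub (hn : 3 ≤ n) {i : Fin n} {a : Fin k} (ha : a.val = 0) (j : Fin n) (b : Fin k) :
    (ringClique n k).Adj (i, a) (j, b) ↔
      (j = i ∧ b ≠ a) ∨ (b = a ∧ (j = isucc i ∨ j = ipred i)) := by
  constructor
  · rintro ⟨hne, h | ⟨-, h2, h3 | h3⟩⟩
    · exact Or.inl ⟨h.symm, fun hb => hne (Prod.ext h hb.symm)⟩
    · exact Or.inr ⟨Fin.ext (h2.trans ha.symm), Or.inl ((succ_eq_iff i j).1 h3)⟩
    · exact Or.inr ⟨Fin.ext (h2.trans ha.symm), Or.inr ((pred_eq_iff (by omega) i j).1 h3)⟩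
  · rintro (⟨rfl, hb⟩ | ⟨rfl, rfl | rfl⟩)
    · exact ⟨fun h => hb (congrArg Prod.snd h).symm, Or.inl rfl⟩
    · refine ⟨fun h => isucc_ne (by omega) i (congrArg Prod.fst h).symm, ?_⟩
      exact Or.inr ⟨ha, ha, Or.inl ((succ_eq_iff i _).2 rfl)⟩
    · refine ⟨fun h => ipred_ne (by omega) i (congrArg Prod.fst h).symm, ?_⟩
      exact Or.inr ⟨ha, ha, Or.inr ((pred_eq_iff (by omega) i _).2 rfl)⟩

/-- generic laplacian row formula -/
lemma lap_row {V : Type*} [Fintype V] [DecidableEq V] (G : SimpleGraph V)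
    [DecidableRel G.Adj] (x : V → ℝ) (v : V) :
    (G.lapMatrix ℝ *ᵥ x) v = ∑ w, if G.Adj v w then x v - x w else 0 := by
  rw [SimpleGraph.lapMatrix_mulVec_apply]
  have hdeg : (G.degree v : ℝ) * x v = ∑ u ∈ G.neighborFinset v, x v := by
    rw [Finset.sum_const, ← SimpleGraph.card_neighborFinset_eq_degree, nsmul_eq_mul]
  rw [hdeg, ← Finset.sum_sub_distrib, SimpleGraph.neighborFinset_eq_filter, Finset.sum_filter]

lemma lap_sum_zero {V : Type*} [Fintype V] [DecidableEq V] (G : SimpleGraph V)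
    [DecidableRel G.Adj] (x : V → ℝ) :
    ∑ v, (G.lapMatrix ℝ *ᵥ x) v = 0 := by
  have h : ∀ v w, (if G.Adj v w then x v - x w else 0)
      = -(if G.Adj w v then x w - x v else 0) := by
    intro v w
    by_cases h : G.Adj v w
    · rw [if_pos h, if_pos h.symm]; ring
    · rw [if_neg h, if_neg (fun h' => h h'.symm)]; ring
  have key : (∑ v, ∑ w, if G.Adj v w then x v - x w else 0) = 0 := by
    have h2 : (∑ v, ∑ w, if G.Adj v w then x v - x w else 0)
        = -∑ v, ∑ w, if G.Adj v w then x v - x w else 0 := by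
      nth_rewrite 1 [Finset.sum_comm]
      rw [← Finset.sum_neg_distrib]
      apply Finset.sum_congr rfl; intro v _
      rw [← Finset.sum_neg_distrib]
      apply Finset.sum_congr rfl; intro w _
      exact h w v
    linarith
  rw [← key]
  exact Finset.sum_congr rfl fun v _ => lap_row G x v

lemma row_nonhub (hn : 3 ≤ n) (x : Fin n × Fin k → ℝ) (i : Fin n) {a : Fin k}
    (ha : a.val ≠ 0) :
    ((ringClique n k).lapMatrix ℝ *ᵥ x) (i, a) = k * x (i, a) - ∑ b, x (i, b) := by
  rw [lap_row, Fintype.sum_prod_type]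
  have h1 : ∀ j : Fin n, (∑ b : Fin k, if (ringClique n k).Adj (i, a) (j, b)
      then x (i, a) - x (j, b) else 0)
      = if j = i then ∑ b : Fin k, (x (i, a) - x (i, b)) else 0 := by
    intro j
    by_cases hj : j = i
    · subst hj
      rw [if_pos rfl]
      apply Finset.sum_congr rfl; intro b _
      simp only [adj_nonhub hn ha]
      by_cases hb : b = a
      · subst hb; simp
      · simp [hb]
    · rw [if_neg hj]
      apply Finset.sum_eq_zero; intro b _
      simp only [adj_nonhub hn ha]
      rw [if_neg (by tauto)]
  rw [Finset.sum_congr rfl fun j _ => h1 j, Finset.sum_ite_eq' Finset.univ i _,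
    if_pos (Finset.mem_univ i), Finset.sum_sub_distrib, Finset.sum_const,
    Finset.card_univ, Fintype.card_fin, nsmul_eq_mul]

lemma row_hub (hn : 3 ≤ n) (x : Fin n × Fin k → ℝ) (i : Fin n) {a : Fin k}
    (ha : a.val = 0) :
    ((ringClique n k).lapMatrix ℝ *ᵥ x) (i, a)
      = k * x (i, a) - (∑ b, x (i, b))
        + (2 * x (i, a) - x (isucc i, a) - x (ipred i, a)) := by
  rw [lap_row, Fintype.sum_prod_type]
  have key : ∀ (j : Fin n) (b : Fin k), (if (ringClique n k).Adj (i, a) (j, b)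
      then x (i, a) - x (j, b) else 0)
      = (if j = i ∧ b ≠ a then x (i, a) - x (j, b) else 0)
        + ((if j = isucc i ∧ b = a then x (i, a) - x (j, b) else 0)
          + (if j = ipred i ∧ b = a then x (i, a) - x (j, b) else 0)) := by
    intro j b
    simp only [adj_hub hn ha]
    have e1 := isucc_ne (show 2 ≤ n by omega) i
    have e2 := ipred_ne (show 2 ≤ n by omega) i
    have e3 := isucc_ne_ipred hn i
    split_ifs <;> first | ring1 | (exfalso; simp_all)
  rw [Finset.sum_congr rfl fun j _ => Finset.sum_congr rfl fun b _ => key j b]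
  simp only [Finset.sum_add_distrib]
  congr 1
  · -- same-clique part
    have h1 : ∀ j : Fin n, (∑ b : Fin k, if j = i ∧ b ≠ a then x (i, a) - x (j, b) else 0)
        = if j = i then ∑ b : Fin k, (x (i, a) - x (i, b)) else 0 := by
      intro j
      by_cases hj : j = i
      · subst hj
        rw [if_pos rfl]
        apply Finset.sum_congr rfl; intro b _
        by_cases hb : b = a
        · subst hb; simp
        · simp [hb]
      · rw [if_neg hj]
        apply Finset.sum_eq_zero; intro b _
        rw [if_neg (by tauto)]
    rw [Finset.sum_congr rfl fun j _ => h1 j, Finset.sum_ite_eq' Finset.univ i _,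
      if_pos (Finset.mem_univ i), Finset.sum_sub_distrib, Finset.sum_const,
      Finset.card_univ, Fintype.card_fin, nsmul_eq_mul]
  · -- ring part
    have h2 : ∀ (w : Fin n), (∑ j : Fin n, ∑ b : Fin k,
        if j = w ∧ b = a then x (i, a) - x (j, b) else 0) = x (i, a) - x (w, a) := by
      intro w
      have h3 : ∀ j : Fin n, (∑ b : Fin k, if j = w ∧ b = a then x (i, a) - x (j, b) else 0)
          = if j = w then x (i, a) - x (j, a) else 0 := by
        intro j
        by_cases hj : j = w
        · subst hj
          rw [if_pos rfl]
          have : ∀ b : Fin k, (if j = j ∧ b = a then x (i, a) - x (j, b) else 0)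
              = if b = a then x (i, a) - x (j, b) else 0 := by
            intro b; by_cases hb : b = a <;> simp [hb]
          rw [Finset.sum_congr rfl fun b _ => this b, Finset.sum_ite_eq' Finset.univ a _,
            if_pos (Finset.mem_univ a)]
        · rw [if_neg hj]
          apply Finset.sum_eq_zero; intro b _
          rw [if_neg (by tauto)]
      rw [Finset.sum_congr rfl fun j _ => h3 j, Finset.sum_ite_eq' Finset.univ w _,
        if_pos (Finset.mem_univ w)]
    rw [h2 (isucc i), h2 (ipred i)]
    ring

/-- Discrete Wirtinger / Poincaré inequality on the cycle. -/
lemma wirtinger (hn : 3 ≤ n) (z : Fin n → ℝ) (hz : ∑ i, z i = 0) :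
    2 * ∑ i, (z i) ^ 2 ≤ (n : ℝ) ^ 2 * ∑ i, (z (isucc i) - z i) ^ 2 := by
  have hn0 : 0 < n := by omega
  set E : ℝ := ∑ i, (z (isucc i) - z i) ^ 2 with hE
  have hE0 : 0 ≤ E := Finset.sum_nonneg fun i _ => sq_nonneg _
  -- key pairwise bound
  have key' : ∀ i j : Fin n, i.val ≤ j.val → (z j - z i) ^ 2 ≤ (n : ℝ) * E := by
    intro i j hij
    set a := i.val with haa
    set b := j.val with hbb
    set m := b - a with hm
    set φ : ℕ → Fin n := fun t => ⟨(a + t) % n, Nat.mod_lt _ hn0⟩ with hφ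
    have hφi : φ 0 = i := by
      apply Fin.ext; simp only [hφ]; rw [Nat.add_zero, Nat.mod_eq_of_lt i.isLt]
    have hφj : φ m = j := by
      apply Fin.ext; simp only [hφ]
      rw [show a + m = b by omega, Nat.mod_eq_of_lt j.isLt]
    have hstep : ∀ t : ℕ, z (φ (t + 1)) - z (φ t) = z (isucc (φ t)) - z (φ t) := by
      intro t
      have : isucc (φ t) = φ (t + 1) := by
        apply Fin.ext
        simp only [hφ, isucc_val]
        rw [show a + (t + 1) = (a + t) + 1 from rfl]
        conv_rhs => rw [Nat.add_mod (a + t) 1 n]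
        rw [Nat.mod_eq_of_lt (show (1:ℕ) < n by omega)]
      rw [this]
    have tele : ∑ t ∈ Finset.range m, (z (isucc (φ t)) - z (φ t)) = z j - z i := by
      rw [← Finset.sum_congr rfl fun t _ => hstep t]
      rw [Finset.sum_range_sub (fun t => z (φ t)), hφi, hφj]
    have cs : (z j - z i) ^ 2 ≤ (m : ℝ) * ∑ t ∈ Finset.range m, (z (isucc (φ t)) - z (φ t)) ^ 2 := by
      rw [← tele]
      have := sq_sum_le_card_mul_sum_sq (s := Finset.range m)
        (f := fun t => z (isucc (φ t)) - z (φ t))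
      simpa using this
    have hsub : ∑ t ∈ Finset.range m, (z (isucc (φ t)) - z (φ t)) ^ 2 ≤ E := by
      have hinj : ∀ t1 ∈ Finset.range m, ∀ t2 ∈ Finset.range m, φ t1 = φ t2 → t1 = t2 := by
        intro t1 ht1 t2 ht2 h
        have h1 : (a + t1) % n = (a + t2) % n := congrArg Fin.val h
        have hb : b < n := j.isLt
        rw [Finset.mem_range] at ht1 ht2
        rw [Nat.mod_eq_of_lt (by omega), Nat.mod_eq_of_lt (by omega)] at h1
        omega
      rw [show (∑ t ∈ Finset.range m, (z (isucc (φ t)) - z (φ t)) ^ 2)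
          = ∑ w ∈ (Finset.range m).image φ, (z (isucc w) - z w) ^ 2
        from (Finset.sum_image (f := fun w => (z (isucc w) - z w) ^ 2) (g := φ) hinj).symm]
      exact Finset.sum_le_sum_of_subset_of_nonneg (Finset.subset_univ _)
        (fun w _ _ => sq_nonneg _)
    calc (z j - z i) ^ 2 ≤ (m : ℝ) * ∑ t ∈ Finset.range m, (z (isucc (φ t)) - z (φ t)) ^ 2 := cs
      _ ≤ (n : ℝ) * E := by
        apply mul_le_mul (by exact_mod_cast Nat.cast_le.2 (show m ≤ n by omega)) hsub
          (Finset.sum_nonneg fun t _ => sq_nonneg _) (by positivity)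
  have key : ∀ i j : Fin n, (z i - z j) ^ 2 ≤ (n : ℝ) * E := by
    intro i j
    rcases le_total j.val i.val with h | h
    · exact key' j i h
    · rw [show (z i - z j) ^ 2 = (z j - z i) ^ 2 by ring]
      exact key' i j h
  have expand : (∑ i, ∑ j, (z i - z j) ^ 2) = 2 * (n : ℝ) * ∑ i, (z i) ^ 2 := by
    have h1 : ∀ i : Fin n, (∑ j, (z i - z j) ^ 2)
        = (n : ℝ) * z i ^ 2 - 2 * z i * (∑ j, z j) + ∑ j, z j ^ 2 := by
      intro i
      rw [Finset.sum_congr rfl fun j _ => show (z i - z j) ^ 2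
          = z i ^ 2 - 2 * z i * z j + z j ^ 2 by ring]
      rw [Finset.sum_add_distrib, Finset.sum_sub_distrib, Finset.sum_const,
        Finset.card_univ, Fintype.card_fin, ← Finset.mul_sum]
      push_cast
      ring
    rw [Finset.sum_congr rfl fun i _ => h1 i, hz]
    rw [Finset.sum_add_distrib, Finset.sum_sub_distrib, ← Finset.mul_sum,
      Finset.sum_const, Finset.card_univ, Fintype.card_fin]
    have : (∑ i : Fin n, 2 * z i * (0:ℝ)) = 0 := by simp
    rw [this]
    push_cast
    ring
  have bound : (∑ i : Fin n, ∑ j : Fin n, (z i - z j) ^ 2)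
      ≤ (n : ℝ) ^ 2 * ((n : ℝ) * E) := by
    calc (∑ i : Fin n, ∑ j : Fin n, (z i - z j) ^ 2)
        ≤ ∑ _i : Fin n, ∑ _j : Fin n, (n : ℝ) * E := by
          apply Finset.sum_le_sum; intro i _
          apply Finset.sum_le_sum; intro j _
          exact key i j
      _ = (n : ℝ) ^ 2 * ((n : ℝ) * E) := by
          rw [Finset.sum_const, Finset.sum_const, Finset.card_univ, Fintype.card_fin]
          push_cast
          ring
  rw [expand] at bound
  have hnR : (0 : ℝ) < n := by exact_mod_cast hn0
  nlinarith [bound]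

set_option maxHeartbeats 1000000 in
/-- Every positive eigenvalue of the ring-of-cliques Laplacian is at least `1/(n²k)`. -/
lemma lower_bound (hn : 3 ≤ n) (hk : 2 ≤ k) {μ : ℝ} {x : Fin n × Fin k → ℝ}
    (hx0 : x ≠ 0) (heig : (ringClique n k).lapMatrix ℝ *ᵥ x = μ • x) (hμ : 0 < μ) :
    1 / ((n : ℝ) ^ 2 * k) ≤ μ := by
  have hnR : (3 : ℝ) ≤ n := by exact_mod_cast hn
  have hkR : (2 : ℝ) ≤ k := by exact_mod_cast hk
  have hnk : (18 : ℝ) ≤ (n : ℝ) ^ 2 * k := by nlinarith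
  have hnkpos : (0 : ℝ) < (n : ℝ) ^ 2 * k := by linarith
  rcases le_or_gt (1 / 2 : ℝ) μ with hbig | hsmall
  · have : 1 / ((n : ℝ) ^ 2 * k) ≤ 1 / 18 := by
      apply one_div_le_one_div_of_le <;> linarith
    linarith
  -- now μ < 1/2
  have hkμ : (0 : ℝ) < (k : ℝ) - μ := by linarith
  have h1μ : (0 : ℝ) < 1 - μ := by linarith
  set o : Fin k := ⟨0, by omega⟩ with ho
  set z : Fin n → ℝ := fun i => (∑ b, x (i, b)) / ((k : ℝ) - μ) with hzdef
  have hSz : ∀ i, (∑ b, x (i, b)) = ((k : ℝ) - μ) * z i := by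
    intro i; rw [hzdef]; field_simp
  -- non-hub rows
  have rowA : ∀ (i : Fin n) (a : Fin k), a.val ≠ 0 → x (i, a) = z i := by
    intro i a ha
    have h1 := congrFun heig (i, a)
    rw [row_nonhub hn x i ha] at h1
    simp only [Pi.smul_apply, smul_eq_mul] at h1
    rw [hzdef]
    field_simp
    linarith [h1]
  -- value of x at hubs
  have hyz : ∀ i : Fin n, x (i, o) = (1 - μ) * z i := by
    intro i
    have hsplit : (∑ b, x (i, b)) = x (i, o) + ((k : ℝ) - 1) * z i := by
      rw [← Finset.add_sum_erase Finset.univ _ (Finset.mem_univ o)]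
      congr 1
      rw [Finset.sum_congr rfl (fun b hb => rowA i b (fun hb0 => by
        rw [Finset.mem_erase] at hb
        exact hb.1 (Fin.ext (hb0.trans rfl))))]
      rw [Finset.sum_const, Finset.card_erase_of_mem (Finset.mem_univ o),
        Finset.card_univ, Fintype.card_fin, nsmul_eq_mul]
      congr 1
      push_cast [Nat.cast_sub (by omega : 1 ≤ k)]
      ring
    have := hSz i
    rw [hsplit] at this
    linarith
  -- sum of x is zero
  have hsx : (∑ v, x v) = 0 := by
    have h1 := lap_sum_zero (ringClique n k) x
    rw [heig] at h1
    simp only [Pi.smul_apply, smul_eq_mul, ← Finset.mul_sum] at h1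
    rcases mul_eq_zero.1 h1 with h | h
    · exact absurd h (ne_of_gt hμ)
    · exact h
  have hsz : (∑ i, z i) = 0 := by
    have h1 : (∑ v, x v) = ((k : ℝ) - μ) * ∑ i, z i := by
      rw [Fintype.sum_prod_type, Finset.sum_congr rfl fun i _ => hSz i, ← Finset.mul_sum]
    rw [hsx] at h1
    rcases mul_eq_zero.1 h1.symm with h | h
    · exact absurd h (ne_of_gt hkμ)
    · exact h
  -- z is nonzero somewhere
  obtain ⟨i0, hi0⟩ : ∃ i, z i ≠ 0 := by
    by_contra hc
    push_neg at hc
    apply hx0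
    funext v
    obtain ⟨i, a⟩ := v
    by_cases ha : a.val = 0
    · have : a = o := Fin.ext (by rw [ha])
      rw [this, hyz i, hc i, Pi.zero_apply, mul_zero]
    · rw [rowA i a ha, hc i, Pi.zero_apply]
  have hQ : (0 : ℝ) < ∑ i, z i ^ 2 := by
    apply Finset.sum_pos' (fun i _ => sq_nonneg _)
    exact ⟨i0, Finset.mem_univ i0, by positivity⟩
  -- hub rows give cycle relation
  set γ : ℝ := μ ^ 2 - ((k : ℝ) + 2) * μ + 2 with hγ
  have hub : ∀ i : Fin n, γ * z i = (1 - μ) * (z (isucc i) + z (ipred i)) := by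
    intro i
    have h1 := congrFun heig (i, o)
    rw [row_hub hn x i (show o.val = 0 from rfl)] at h1
    simp only [Pi.smul_apply, smul_eq_mul] at h1
    rw [hSz i, hyz i, hyz (isucc i), hyz (ipred i)] at h1
    rw [hγ]
    nlinarith [h1]
  -- quadratic forms
  set Q : ℝ := ∑ i, z i ^ 2 with hQdef
  set E : ℝ := ∑ i, (z (isucc i) - z i) ^ 2 with hEdef
  have hbij : Function.Bijective (isucc : Fin n → Fin n) := isucc_bijective (by omega)
  have hshift : (∑ i, z (isucc i) ^ 2) = Q := by
    rw [hQdef]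
    exact Function.Bijective.sum_comp hbij (fun j => z j ^ 2)
  set P : ℝ := ∑ i, z (isucc i) * z i with hPdef
  have hpred : (∑ i, z i * z (ipred i)) = P := by
    rw [hPdef]
    have := Function.Bijective.sum_comp hbij (fun j => z j * z (ipred j))
    calc (∑ i, z i * z (ipred i)) = ∑ i, z (isucc i) * z (ipred (isucc i)) := this.symm
      _ = ∑ i, z (isucc i) * z i := by
          apply Finset.sum_congr rfl; intro i _; rw [ipred_isucc]
  have hEQ : E = 2 * Q - 2 * P := by
    rw [hEdef, Finset.sum_congr rfl fun i _ => show (z (isucc i) - z i) ^ 2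
        = z (isucc i) ^ 2 - 2 * (z (isucc i) * z i) + z i ^ 2 by ring]
    rw [Finset.sum_add_distrib, Finset.sum_sub_distrib, hshift, ← Finset.mul_sum, ← hPdef,
      ← hQdef]
    ring
  have hγQ : γ * Q = 2 * (1 - μ) * P := by
    have h1 : (∑ i, γ * z i * z i) = ∑ i, (1 - μ) * (z (isucc i) + z (ipred i)) * z i := by
      apply Finset.sum_congr rfl; intro i _; rw [hub i]
    have h2 : (∑ i, γ * z i * z i) = γ * Q := by
      rw [hQdef, Finset.mul_sum]
      apply Finset.sum_congr rfl; intro i _; ring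
    have h3 : (∑ i, (1 - μ) * (z (isucc i) + z (ipred i)) * z i)
        = (1 - μ) * (∑ i, z (isucc i) * z i) + (1 - μ) * ∑ i, z i * z (ipred i) := by
      rw [Finset.sum_congr rfl fun i _ => show (1 - μ) * (z (isucc i) + z (ipred i)) * z i
          = (1 - μ) * (z (isucc i) * z i) + (1 - μ) * (z i * z (ipred i)) by ring]
      rw [Finset.sum_add_distrib, ← Finset.mul_sum, ← Finset.mul_sum]
    rw [h2, h3, hpred, ← hPdef] at h1
    rw [h1]; ring
  -- combine with Wirtinger
  have hwirt := wirtinger hn z hsz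
  clear_value Q E P
  rw [← hQdef, ← hEdef] at hwirt
  have hfinal : 2 * (1 - μ) * Q ≤ (n : ℝ) ^ 2 * (μ * ((k : ℝ) - μ)) * Q := by
    have h1 : (1 - μ) * E = (2 * (1 - μ) - γ) * Q := by
      rw [hEQ]; nlinarith [hγQ]
    have h2 : 2 * (1 - μ) - γ = μ * ((k : ℝ) - μ) := by rw [hγ]; ring
    have h3 : 2 * (1 - μ) * Q ≤ (n : ℝ) ^ 2 * ((1 - μ) * E) := by nlinarith [hwirt]
    rw [h1, h2] at h3
    nlinarith [h3]
  have h4 : 2 * (1 - μ) ≤ (n : ℝ) ^ 2 * (μ * ((k : ℝ) - μ)) :=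
    le_of_mul_le_mul_right (by nlinarith [hfinal]) hQ
  have h5 : 1 ≤ (n : ℝ) ^ 2 * k * μ := by nlinarith [h4, sq_nonneg μ]
  rw [div_le_iff₀ hnkpos]
  nlinarith [h5]

set_option maxHeartbeats 1000000 in
/-- There is a small positive eigenvalue of the ring-of-cliques Laplacian. -/
lemma upper_bound (hn : 3 ≤ n) (hk : 2 ≤ k) :
    ∃ μ : ℝ, (∃ x : Fin n × Fin k → ℝ, x ≠ 0 ∧ (ringClique n k).lapMatrix ℝ *ᵥ x = μ • x)
      ∧ 0 < μ ∧ μ ≤ 128 / ((n : ℝ) ^ 2 * k) := by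
  have hπ := Real.pi_pos
  have hnR : (3 : ℝ) ≤ n := by exact_mod_cast hn
  have hkR : (2 : ℝ) ≤ k := by exact_mod_cast hk
  set θ : ℝ := 2 * Real.pi / n with hθdef
  have hθpos : 0 < θ := by rw [hθdef]; positivity
  have hθn : θ * n = 2 * Real.pi := by rw [hθdef]; field_simp
  have hθlt : θ < 2 * Real.pi := by
    rw [hθdef, div_lt_iff₀ (by linarith : (0:ℝ) < n)]
    nlinarith
  set s : ℝ := 2 - 2 * Real.cos θ with hsdef
  have hcos1 : Real.cos θ < 1 := by
    rcases lt_or_eq_of_le (Real.cos_le_one θ) with h | h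
    · exact h
    · exfalso
      have := (Real.cos_eq_one_iff_of_lt_of_lt (by linarith) (by linarith)).1 h
      linarith
  have hs0 : 0 < s := by rw [hsdef]; linarith
  have hs4 : s ≤ 4 := by rw [hsdef]; nlinarith [Real.neg_one_le_cos θ]
  have hsub : s * (n : ℝ) ^ 2 ≤ 64 := by
    have h1 : 1 - θ ^ 2 / 2 ≤ Real.cos θ := Real.one_sub_sq_div_two_le_cos
    have h2 : s ≤ θ ^ 2 := by rw [hsdef]; linarith
    have h3 : θ ^ 2 * (n : ℝ) ^ 2 = (2 * Real.pi) ^ 2 := by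
      rw [← mul_pow, hθn]
    have h4 : (2 * Real.pi) ^ 2 ≤ 64 := by nlinarith [Real.pi_le_four]
    nlinarith [sq_nonneg (n : ℝ), h2, h3, h4]
  set A : ℝ := (k : ℝ) + s with hAdef
  have hA2 : 2 + s ≤ A := by rw [hAdef]; linarith
  have hApos : 0 < A := by linarith
  set D : ℝ := A ^ 2 - 4 * s with hDdef
  have hD0 : 0 ≤ D := by rw [hDdef]; nlinarith
  set r : ℝ := Real.sqrt D with hrdef
  have hr2 : r ^ 2 = A ^ 2 - 4 * s := by rw [hrdef, Real.sq_sqrt hD0, hDdef]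
  have hr0 : 0 ≤ r := Real.sqrt_nonneg _
  set μ : ℝ := (A - r) / 2 with hμdef
  have hroot : μ ^ 2 - A * μ + s = 0 := by
    rw [hμdef]; linear_combination hr2 / 4
  have hμpos : 0 < μ := by
    have : r < A := by
      rw [hrdef]
      rw [show Real.sqrt D < A ↔ D < A ^ 2 from Real.sqrt_lt' hApos]
      rw [hDdef]; linarith
    rw [hμdef]; linarith
  have hμ1 : μ < 1 := by
    have h1 : A - 2 < r := by
      rw [hrdef]
      have := (Real.lt_sqrt (by linarith : (0:ℝ) ≤ A - 2)).2
        (show (A - 2) ^ 2 < D by rw [hDdef]; nlinarith)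
      exact this
    rw [hμdef]; linarith
  -- bound on μ
  have hnkpos : (0 : ℝ) < (n : ℝ) ^ 2 * k := by nlinarith
  have hμub : μ ≤ 128 / ((n : ℝ) ^ 2 * k) := by
    have h1 : μ * (A - μ) = s := by linear_combination (-1 : ℝ) * hroot
    have h2 : (k : ℝ) / 2 ≤ A - μ := by rw [hAdef] at *; linarith
    have h3 : μ * ((k : ℝ) / 2) ≤ s := by nlinarith
    rw [le_div_iff₀ hnkpos]
    nlinarith [mul_le_mul_of_nonneg_right h3 (sq_nonneg (n : ℝ))]
  -- the eigenvector
  set c : Fin n → ℝ := fun i => Real.cos (θ * i.val) with hcdef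
  have hmod : ∀ m : ℕ, Real.cos (θ * ((m % n : ℕ) : ℝ)) = Real.cos (θ * m) := by
    intro m
    conv_rhs => rw [← Nat.div_add_mod m n]
    have h1 : θ * ((n * (m / n) + m % n : ℕ) : ℝ)
        = θ * ((m % n : ℕ) : ℝ) + (m / n : ℕ) * (2 * Real.pi) := by
      push_cast
      rw [← hθn]
      ring
    rw [h1, Real.cos_add_nat_mul_two_pi]
  have hkey : ∀ i : Fin n, c (isucc i) + c (ipred i) = (2 - s) * c i := by
    intro i
    have h1 : c (isucc i) = Real.cos (θ * i.val + θ) := by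
      rw [hcdef]
      show Real.cos (θ * (((i.val + 1) % n : ℕ) : ℝ)) = _
      rw [hmod (i.val + 1)]
      push_cast
      ring_nf
    have h2 : c (ipred i) = Real.cos (θ * i.val - θ) := by
      rw [hcdef]
      show Real.cos (θ * (((i.val + n - 1) % n : ℕ) : ℝ)) = _
      rw [hmod (i.val + n - 1)]
      have hcast : ((i.val + n - 1 : ℕ) : ℝ) = (i.val : ℝ) + n - 1 := by
        have : 1 ≤ i.val + n := by omega
        push_cast [Nat.cast_sub this]
        ring
      rw [hcast, show θ * ((i.val : ℝ) + n - 1) = (θ * i.val - θ) + (1 : ℕ) * (2 * Real.pi) by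
        rw [← hθn]; push_cast; ring]
      rw [Real.cos_add_nat_mul_two_pi]
    rw [h1, h2, Real.cos_add, Real.cos_sub, hsdef, hcdef]
    ring
  set x : Fin n × Fin k → ℝ := fun v => if v.2.val = 0 then (1 - μ) * c v.1 else c v.1
    with hxdef
  have hx0 : x ≠ 0 := by
    intro h
    have h1 := congrFun h (⟨0, by omega⟩, ⟨1, by omega⟩)
    rw [hxdef] at h1
    simp only [Pi.zero_apply] at h1
    rw [if_neg (by simp)] at h1
    rw [hcdef] at h1
    simp only [Fin.val_mk, Nat.cast_zero, mul_zero, Real.cos_zero] at h1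
    exact one_ne_zero h1
  have hsum : ∀ i : Fin n, (∑ b : Fin k, x (i, b)) = (1 - μ) * c i + ((k : ℝ) - 1) * c i := by
    intro i
    set o : Fin k := ⟨0, by omega⟩ with ho
    have h1 : ∀ b : Fin k, x (i, b) = c i + (if b = o then (1 - μ) * c i - c i else 0) := by
      intro b
      simp only [hxdef]
      by_cases hb : b.val = 0
      · have hbo : b = o := Fin.ext hb
        rw [if_pos hb, if_pos hbo]; ring
      · have hbo : b ≠ o := fun hh => hb (by rw [hh])
        rw [if_neg hb, if_neg hbo]; ring
    rw [Finset.sum_congr rfl fun b _ => h1 b, Finset.sum_add_distrib, Finset.sum_const,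
      Finset.card_univ, Fintype.card_fin, Finset.sum_ite_eq' Finset.univ o _,
      if_pos (Finset.mem_univ o), nsmul_eq_mul]
    ring
  refine ⟨μ, ⟨x, hx0, ?_⟩, hμpos, hμub⟩
  funext v
  obtain ⟨i, a⟩ := v
  by_cases ha : a.val = 0
  · rw [row_hub hn x i ha]
    have e1 : x (i, a) = (1 - μ) * c i := by rw [hxdef]; exact if_pos ha
    have e2 : x (isucc i, a) = (1 - μ) * c (isucc i) := by rw [hxdef]; exact if_pos ha
    have e3 : x (ipred i, a) = (1 - μ) * c (ipred i) := by rw [hxdef]; exact if_pos ha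
    rw [Pi.smul_apply, smul_eq_mul, e1, e2, e3, hsum i]
    have h4 := hkey i
    linear_combination (c i) * hroot - (1 - μ) * h4
  · rw [row_nonhub hn x i ha]
    have e1 : x (i, a) = c i := by rw [hxdef]; exact if_neg ha
    rw [Pi.smul_apply, smul_eq_mul, e1, hsum i]
    ring

end RCaux

theorem lamMinPos_ringClique_order :
    ∃ c C : ℝ, 0 < c ∧ c ≤ C ∧ ∀ n k : ℕ, 3 ≤ n → 2 ≤ k →
      c / ((n : ℝ) ^ 2 * (k : ℝ)) ≤ lamMinPos ((ringClique n k).lapMatrix ℝ) ∧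
      lamMinPos ((ringClique n k).lapMatrix ℝ) ≤ C / ((n : ℝ) ^ 2 * (k : ℝ)) := by
  refine ⟨1, 128, one_pos, by norm_num, ?_⟩
  intro n k hn hk
  have hnR : (3 : ℝ) ≤ n := by exact_mod_cast hn
  have hkR : (2 : ℝ) ≤ k := by exact_mod_cast hk
  have hnkpos : (0 : ℝ) < (n : ℝ) ^ 2 * k := by nlinarith
  obtain ⟨μ0, hμ0mem, hμ0pos, hμ0ub⟩ := RCaux.upper_bound hn hk
  have hmem : μ0 ∈ {μ | μ ∈ eigSet ((ringClique n k).lapMatrix ℝ) ∧ 0 < μ} :=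
    ⟨hμ0mem, hμ0pos⟩
  have hlb : ∀ b ∈ {μ | μ ∈ eigSet ((ringClique n k).lapMatrix ℝ) ∧ 0 < μ},
      1 / ((n : ℝ) ^ 2 * k) ≤ b := by
    rintro b ⟨⟨x, hx0, hx⟩, hbpos⟩
    exact RCaux.lower_bound hn hk hx0 hx hbpos
  have hset : {μ | μ ∈ eigSet ((ringClique n k).lapMatrix ℝ) ∧ 0 < μ}
      = {μ ∈ eigSet ((ringClique n k).lapMatrix ℝ) | 0 < μ} := rfl
  constructor
  · rw [lamMinPos, ← hset]
    exact le_csInf ⟨μ0, hmem⟩ hlb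
  · rw [lamMinPos, ← hset]
    calc sInf {μ | μ ∈ eigSet ((ringClique n k).lapMatrix ℝ) ∧ 0 < μ}
        ≤ μ0 := csInf_le ⟨1 / ((n : ℝ) ^ 2 * k), hlb⟩ hmem
      _ ≤ 128 / ((n : ℝ) ^ 2 * k) := hμ0ub
end

section
/- For all integers n ≥ 3 and k ≥ 2, the largest eigenvalue of the Laplacian of the ring-of-cliques graph satisfies k ≤ λ_max(L(G_RC(n,k))) ≤ k + 4. -/
open Matrix

section RingCliqueAux

variable {n k : ℕ}

/-- Laplacian mulVec as a sum over adjacency. -/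
lemma lapMV {V : Type*} [Fintype V] [DecidableEq V] (G : SimpleGraph V)
    [DecidableRel G.Adj] (x : V → ℝ) (v : V) :
    (G.lapMatrix ℝ *ᵥ x) v = ∑ w, if G.Adj v w then x v - x w else 0 := by
  rw [SimpleGraph.lapMatrix_mulVec_apply]
  have hNF : G.neighborFinset v = Finset.univ.filter (G.Adj v) := by
    ext w; simp [SimpleGraph.mem_neighborFinset]
  have h1 : ∀ w, (if G.Adj v w then x v - x w else 0)
      = (if G.Adj v w then x v else 0) - (if G.Adj v w then x w else 0) := by
    intro w; split <;> simp
  simp_rw [h1, Finset.sum_sub_distrib]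
  congr 1
  · rw [← Finset.sum_filter, Finset.sum_const, nsmul_eq_mul, SimpleGraph.degree, hNF]
  · rw [← Finset.sum_filter, hNF]

lemma succ_mod_ne {n : ℕ} (hn : 2 ≤ n) {m : ℕ} (hm : m < n) : (m + 1) % n ≠ m := by
  rcases Nat.lt_or_ge (m + 1) n with h | h
  · rw [Nat.mod_eq_of_lt h]; omega
  · have : m + 1 = n := by omega
    rw [this, Nat.mod_self]; omega

/-- ring condition forces distinct first coordinates. -/
lemma ring_ne_fst (hn : 3 ≤ n) {v w : Fin n × Fin k}
    (h : w.1.val = (v.1.val + 1) % n ∨ v.1.val = (w.1.val + 1) % n) : v.1 ≠ w.1 := by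
  intro he
  rcases h with h | h
  · exact succ_mod_ne (by omega) v.1.isLt (by rw [← he] at h; exact h.symm)
  · exact succ_mod_ne (by omega) w.1.isLt (by rw [he] at h; exact h.symm)

lemma adj_iff (hn : 3 ≤ n) (v w : Fin n × Fin k) :
    (ringClique n k).Adj v w ↔
      (v.1 = w.1 ∧ v.2 ≠ w.2) ∨
      (v.2.val = 0 ∧ w.2.val = 0 ∧
        (w.1.val = (v.1.val + 1) % n ∨ v.1.val = (w.1.val + 1) % n)) := by
  constructor
  · rintro ⟨hne, h | h⟩
    · exact Or.inl ⟨h, fun h2 => hne (Prod.ext h h2)⟩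
    · exact Or.inr h
  · rintro (⟨h1, h2⟩ | ⟨h1, h2, h3⟩)
    · exact ⟨fun he => h2 (congrArg Prod.snd he), Or.inl h1⟩
    · exact ⟨fun he => ring_ne_fst hn h3 (congrArg Prod.fst he), Or.inr ⟨h1, h2, h3⟩⟩

/-- the test eigenvector: `1 - k` on hub vertices, `1` elsewhere. -/
noncomputable def evec (k : ℕ) {n : ℕ} (v : Fin n × Fin k) : ℝ :=
  if v.2.val = 0 then 1 - k else 1

lemma evec_eig (hn : 3 ≤ n) (hk : 2 ≤ k) :
    (ringClique n k).lapMatrix ℝ *ᵥ evec k = (k : ℝ) • evec k := by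
  funext v
  rw [lapMV]
  rcases eq_or_ne v.2.val 0 with hv | hv
  · have hterm : ∀ w : Fin n × Fin k,
        (if (ringClique n k).Adj v w then evec k v - evec k w else 0)
        = (if w.1 = v.1 ∧ w.2.val ≠ 0 then -(k : ℝ) else 0) := by
      intro w
      by_cases ha : (ringClique n k).Adj v w
      · rcases (adj_iff hn v w).mp ha with ⟨h1, h2⟩ | ⟨h1, h2, h3⟩
        · have hw2 : w.2.val ≠ 0 := by
            intro h0
            exact h2 (Fin.ext (by rw [hv, h0]))
          rw [if_pos ha, if_pos ⟨h1.symm, hw2⟩]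
          simp [evec, hv, hw2]
        · rw [if_pos ha, if_neg (by rintro ⟨_, hw2⟩; exact hw2 h2)]
          simp [evec, hv, h2]
      · rw [if_neg ha, if_neg]
        rintro ⟨h1, h2⟩
        exact ha ((adj_iff hn v w).mpr (Or.inl ⟨h1.symm,
          fun he => h2 (by rw [← he, hv])⟩))
    rw [Finset.sum_congr rfl fun w _ => hterm w]
    rw [Fintype.sum_prod_type]
    have hin : ∀ j : Fin n, (∑ b : Fin k, if j = v.1 ∧ (b : Fin k).val ≠ 0 then -(k : ℝ) else 0)
        = if j = v.1 then ((k : ℝ) - 1) * (-(k:ℝ)) else 0 := by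
      intro j
      simp_rw [ite_and]
      split
      · have h : (∑ b : Fin k, if (b : Fin k).val ≠ 0 then -(k : ℝ) else 0)
            = ∑ b : Fin k, ((-(k:ℝ)) - if b = (⟨0, by omega⟩ : Fin k) then -(k : ℝ) else 0) := by
          refine Finset.sum_congr rfl fun b _ => ?_
          rcases eq_or_ne b.val 0 with h0 | h0
          · rw [if_neg (by omega), if_pos (Fin.ext h0)]; ring
          · rw [if_pos h0, if_neg (fun he => h0 (by rw [he]))]; ring
        rw [h, Finset.sum_sub_distrib, Finset.sum_const, Finset.card_univ,
          Fintype.card_fin, Finset.sum_ite_eq' Finset.univ, if_pos (Finset.mem_univ _),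
          nsmul_eq_mul]
        ring
      · simp
    rw [Finset.sum_congr rfl fun j _ => hin j, Finset.sum_ite_eq' Finset.univ,
      if_pos (Finset.mem_univ _)]
    simp [evec, hv]
    ring
  · have hterm : ∀ w : Fin n × Fin k,
        (if (ringClique n k).Adj v w then evec k v - evec k w else 0)
        = (if w.1 = v.1 ∧ w.2.val = 0 then (k : ℝ) else 0) := by
      intro w
      by_cases ha : (ringClique n k).Adj v w
      · rcases (adj_iff hn v w).mp ha with ⟨h1, h2⟩ | ⟨h1, h2, h3⟩
        · rcases eq_or_ne w.2.val 0 with hw2 | hw2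
          · rw [if_pos ha, if_pos ⟨h1.symm, hw2⟩]
            simp [evec, hv, hw2]
          · rw [if_pos ha, if_neg (by rintro ⟨_, h0⟩; exact hw2 h0)]
            simp [evec, hv, hw2]
        · exact absurd h1 hv
      · rw [if_neg ha, if_neg]
        rintro ⟨h1, h2⟩
        exact ha ((adj_iff hn v w).mpr (Or.inl ⟨h1.symm,
          fun he => hv (by rw [he, h2])⟩))
    rw [Finset.sum_congr rfl fun w _ => hterm w]
    rw [Fintype.sum_prod_type]
    have hin : ∀ j : Fin n, (∑ b : Fin k, if j = v.1 ∧ (b : Fin k).val = 0 then (k : ℝ) else 0)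
        = if j = v.1 then (k : ℝ) else 0 := by
      intro j
      simp_rw [ite_and]
      split
      · have h : ∀ b : Fin k, (if (b : Fin k).val = 0 then (k : ℝ) else 0)
            = if b = (⟨0, by omega⟩ : Fin k) then (k : ℝ) else 0 := by
          intro b
          rcases eq_or_ne b.val 0 with h0 | h0
          · rw [if_pos h0, if_pos (Fin.ext h0)]
          · rw [if_neg h0, if_neg (fun he => h0 (by rw [he]))]
        rw [Finset.sum_congr rfl fun b _ => h b, Finset.sum_ite_eq' Finset.univ,
          if_pos (Finset.mem_univ _)]
      · simp
    rw [Finset.sum_congr rfl fun j _ => hin j, Finset.sum_ite_eq' Finset.univ,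
      if_pos (Finset.mem_univ _)]
    simp [evec, hv]

lemma sq_sum_bound (k : ℕ) (y : Fin k → ℝ) :
    ∑ a, ∑ b, (y a - y b)^2 ≤ 2 * k * ∑ a, (y a)^2 := by
  have h1 : ∀ a, ∑ b, (y a - y b)^2
      = k * (y a)^2 - 2 * (y a) * (∑ b, y b) + ∑ b, (y b)^2 := by
    intro a
    have h : ∀ b, (y a - y b)^2 = ((y a)^2 - 2*(y a)*(y b)) + (y b)^2 := by
      intro b; ring
    simp_rw [h]
    rw [Finset.sum_add_distrib, Finset.sum_sub_distrib, Finset.sum_const,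
      Finset.card_univ, Fintype.card_fin, ← Finset.mul_sum, nsmul_eq_mul]
  rw [Finset.sum_congr rfl fun a _ => h1 a]
  rw [Finset.sum_add_distrib, Finset.sum_sub_distrib, Finset.sum_const,
    Finset.card_univ, Fintype.card_fin, nsmul_eq_mul]
  have e1 : ∑ a, (k:ℝ) * (y a)^2 = k * ∑ a, (y a)^2 := by rw [Finset.mul_sum]
  have e2 : ∑ a, 2 * (y a) * (∑ b, y b) = 2 * (∑ a, y a)^2 := by
    have h : ∀ a, 2 * (y a) * (∑ b, y b) = (y a) * (2 * ∑ b, y b) := by intro a; ring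
    rw [Finset.sum_congr rfl fun a _ => h a, ← Finset.sum_mul]
    ring
  rw [e1, e2]
  nlinarith [sq_nonneg (∑ a, y a)]

/-- the ring part of the adjacency -/
def rc2 (n : ℕ) {k : ℕ} (v w : Fin n × Fin k) : Prop :=
  v.2.val = 0 ∧ w.2.val = 0 ∧
    (w.1.val = (v.1.val + 1) % n ∨ v.1.val = (w.1.val + 1) % n)

instance (v w : Fin n × Fin k) : Decidable (rc2 n v w) := by
  unfold rc2; infer_instance

lemma rc2_symm (v w : Fin n × Fin k) : rc2 n v w ↔ rc2 n w v := by
  unfold rc2; tauto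

lemma card_rc2 (hn : 3 ≤ n) (hk : 2 ≤ k) (v : Fin n × Fin k) :
    (Finset.univ.filter (fun w => rc2 n v w)).card ≤ 2 := by
  have hn0 : 0 < n := by omega
  have hk0 : 0 < k := by omega
  set w1 : Fin n × Fin k := (⟨(v.1.val + 1) % n, Nat.mod_lt _ hn0⟩, ⟨0, hk0⟩) with hw1
  set w2 : Fin n × Fin k := (⟨(v.1.val + (n - 1)) % n, Nat.mod_lt _ hn0⟩, ⟨0, hk0⟩) with hw2
  have hsub : (Finset.univ.filter (fun w => rc2 n v w)) ⊆ ({w1, w2} : Finset _) := by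
    intro w hw
    simp only [Finset.mem_filter, Finset.mem_univ, true_and] at hw
    obtain ⟨_, h0, h | h⟩ := hw
    · apply Finset.mem_insert.mpr; left
      exact Prod.ext (Fin.ext (by rw [hw1]; exact h)) (Fin.ext (by rw [hw1]; exact h0))
    · apply Finset.mem_insert.mpr; right
      apply Finset.mem_singleton.mpr
      have hval : (v.1.val + (n - 1)) % n = w.1.val := by
        conv_lhs => rw [h]
        rw [Nat.mod_add_mod]
        have h2 : w.1.val + 1 + (n - 1) = w.1.val + n := by omega
        rw [h2, Nat.add_mod_right, Nat.mod_eq_of_lt w.1.isLt]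
      exact Prod.ext (Fin.ext (by rw [hw2]; exact hval.symm)) (Fin.ext (by rw [hw2]; exact h0))
  refine (Finset.card_le_card hsub).trans ?_
  refine (Finset.card_insert_le _ _).trans ?_
  simp

end RingCliqueAux

theorem lamMax_ringClique_bounds (n k : ℕ) (hn : 3 ≤ n) (hk : 2 ≤ k) :
    (k : ℝ) ≤ lamMax ((ringClique n k).lapMatrix ℝ) ∧
    lamMax ((ringClique n k).lapMatrix ℝ) ≤ (k : ℝ) + 4 := by
  have hn0 : 0 < n := by omega
  have hxne : (evec k : Fin n × Fin k → ℝ) ≠ 0 := by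
    intro h
    have h2 := congrFun h (⟨0, hn0⟩, ⟨1, by omega⟩)
    simp [evec] at h2
  have hkmem : (k : ℝ) ∈ eigSet ((ringClique n k).lapMatrix ℝ) :=
    ⟨evec k, hxne, evec_eig hn hk⟩
  have hub : ∀ μ ∈ eigSet ((ringClique n k).lapMatrix ℝ), μ ≤ (k : ℝ) + 4 := by
    rintro μ ⟨x, hx0, hx⟩
    set s : ℝ := ∑ v, (x v)^2 with hs_def
    have hs : 0 < s := by
      obtain ⟨v, hv⟩ := Function.ne_iff.mp hx0
      exact Finset.sum_pos' (fun i _ => sq_nonneg _)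
        ⟨v, Finset.mem_univ v, lt_of_le_of_ne (sq_nonneg _) (Ne.symm (pow_ne_zero 2 hv))⟩
    have hmuD : μ * s = ∑ v, ∑ w,
        if (ringClique n k).Adj v w then (x v - x w) * x v else 0 := by
      have h1 : ∀ v, μ * (x v)^2
          = (∑ w, if (ringClique n k).Adj v w then x v - x w else 0) * x v := by
        intro v
        have h2 : ((ringClique n k).lapMatrix ℝ *ᵥ x) v = μ * x v := by rw [hx]; simp
        rw [lapMV] at h2
        rw [h2]; ring
      calc μ * s = ∑ v, μ * (x v)^2 := by rw [hs_def, Finset.mul_sum]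
        _ = ∑ v, (∑ w, if (ringClique n k).Adj v w then x v - x w else 0) * x v :=
            Finset.sum_congr rfl fun v _ => h1 v
        _ = _ := by
            refine Finset.sum_congr rfl fun v _ => ?_
            rw [Finset.sum_mul]
            exact Finset.sum_congr rfl fun w _ => by rw [ite_mul, zero_mul]
    have hswap : (∑ v, ∑ w, if (ringClique n k).Adj v w then (x v - x w) * x v else 0)
        = ∑ v, ∑ w, if (ringClique n k).Adj v w then (x w - x v) * x w else 0 := by
      rw [Finset.sum_comm]
      exact Finset.sum_congr rfl fun a _ => Finset.sum_congr rfl fun b _ =>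
        if_congr ((ringClique n k).adj_comm b a) rfl rfl
    have h2D : 2 * (μ * s) = ∑ v, ∑ w,
        if (ringClique n k).Adj v w then (x v - x w)^2 else 0 := by
      calc 2 * (μ * s)
          = (∑ v, ∑ w, if (ringClique n k).Adj v w then (x v - x w) * x v else 0)
            + (∑ v, ∑ w, if (ringClique n k).Adj v w then (x w - x v) * x w else 0) := by
            rw [← hswap, ← hmuD]; ring
        _ = ∑ v, ∑ w, ((if (ringClique n k).Adj v w then (x v - x w) * x v else 0)
            + (if (ringClique n k).Adj v w then (x w - x v) * x w else 0)) := by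
            rw [← Finset.sum_add_distrib]
            exact Finset.sum_congr rfl fun v _ => (Finset.sum_add_distrib).symm
        _ = _ := by
            refine Finset.sum_congr rfl fun v _ => Finset.sum_congr rfl fun w _ => ?_
            by_cases h : (ringClique n k).Adj v w <;> simp [h] <;> ring
    have hsplit : ∀ v w : Fin n × Fin k,
        (if (ringClique n k).Adj v w then (x v - x w)^2 else 0)
        ≤ (if v.1 = w.1 then (x v - x w)^2 else 0)
          + (if rc2 n v w then 2*(x v)^2 + 2*(x w)^2 else 0) := by
      intro v w
      have hB : (0:ℝ) ≤ if v.1 = w.1 then (x v - x w)^2 else 0 := by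
        split <;> positivity
      have hC : (0:ℝ) ≤ if rc2 n v w then 2*(x v)^2 + 2*(x w)^2 else 0 := by
        split <;> positivity
      by_cases ha : (ringClique n k).Adj v w
      · rw [if_pos ha]
        rcases (adj_iff hn v w).mp ha with ⟨h1, _⟩ | hC2
        · rw [if_pos h1]; linarith
        · have hr : rc2 n v w := hC2
          rw [if_pos hr]
          nlinarith [sq_nonneg (x v + x w)]
      · rw [if_neg ha]; linarith
    have hQ1 : (∑ v : Fin n × Fin k, ∑ w : Fin n × Fin k,
        if v.1 = w.1 then (x v - x w)^2 else 0) ≤ 2*k*s := by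
      have hexp : (∑ v : Fin n × Fin k, ∑ w : Fin n × Fin k,
          if v.1 = w.1 then (x v - x w)^2 else 0)
          = ∑ i : Fin n, ∑ a : Fin k, ∑ j : Fin n, ∑ b : Fin k,
            if i = j then (x (i,a) - x (j,b))^2 else 0 := by
        rw [Fintype.sum_prod_type]
        exact Finset.sum_congr rfl fun i _ => Finset.sum_congr rfl fun a _ => by
          rw [Fintype.sum_prod_type]
      rw [hexp]
      have hinner : ∀ (i : Fin n) (a : Fin k),
          (∑ j : Fin n, ∑ b : Fin k, if i = j then (x (i,a) - x (j,b))^2 else 0)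
          = ∑ b : Fin k, (x (i,a) - x (i,b))^2 := by
        intro i a
        have h : ∀ j : Fin n, (∑ b : Fin k, if i = j then (x (i,a) - x (j,b))^2 else 0)
            = if j = i then ∑ b : Fin k, (x (i,a) - x (j,b))^2 else 0 := by
          intro j
          rcases eq_or_ne j i with h | h
          · subst h; simp
          · simp [h, Ne.symm h]
        rw [Finset.sum_congr rfl fun j _ => h j, Finset.sum_ite_eq' Finset.univ,
          if_pos (Finset.mem_univ _)]
      calc (∑ i : Fin n, ∑ a : Fin k, ∑ j : Fin n, ∑ b : Fin k,
            if i = j then (x (i,a) - x (j,b))^2 else 0)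
          = ∑ i : Fin n, ∑ a : Fin k, ∑ b : Fin k, (x (i,a) - x (i,b))^2 :=
            Finset.sum_congr rfl fun i _ => Finset.sum_congr rfl fun a _ => hinner i a
        _ ≤ ∑ i : Fin n, 2*k*∑ a : Fin k, (x (i,a))^2 :=
            Finset.sum_le_sum fun i _ => sq_sum_bound k (fun a => x (i,a))
        _ = 2*k*s := by rw [hs_def, Fintype.sum_prod_type, Finset.mul_sum]
    have cardb : ∀ v : Fin n × Fin k, ∀ c : ℝ, 0 ≤ c →
        (∑ w : Fin n × Fin k, if rc2 n v w then c else 0) ≤ 2 * c := by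
      intro v c hc
      rw [← Finset.sum_filter, Finset.sum_const, nsmul_eq_mul]
      apply mul_le_mul_of_nonneg_right _ hc
      exact_mod_cast card_rc2 hn hk v
    have hQ2 : (∑ v : Fin n × Fin k, ∑ w : Fin n × Fin k,
        if rc2 n v w then 2*(x v)^2 + 2*(x w)^2 else 0) ≤ 8*s := by
      have hA : (∑ v : Fin n × Fin k, ∑ w : Fin n × Fin k,
          if rc2 n v w then 2*(x v)^2 else 0) ≤ 4*s := by
        calc (∑ v : Fin n × Fin k, ∑ w : Fin n × Fin k,
              if rc2 n v w then 2*(x v)^2 else 0)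
            ≤ ∑ v : Fin n × Fin k, 2*(2*(x v)^2) :=
              Finset.sum_le_sum fun v _ => cardb v _ (by positivity)
          _ = 4*s := by
              rw [hs_def, Finset.mul_sum]
              exact Finset.sum_congr rfl fun v _ => by ring
      have hB : (∑ v : Fin n × Fin k, ∑ w : Fin n × Fin k,
          if rc2 n v w then 2*(x w)^2 else 0) ≤ 4*s := by
        rw [Finset.sum_comm]
        have h : ∀ w : Fin n × Fin k,
            (∑ v : Fin n × Fin k, if rc2 n v w then 2*(x w)^2 else 0)
            = ∑ v : Fin n × Fin k, if rc2 n w v then 2*(x w)^2 else 0 :=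
          fun w => Finset.sum_congr rfl fun v _ => if_congr (rc2_symm v w) rfl rfl
        rw [Finset.sum_congr rfl fun w _ => h w]
        calc (∑ w : Fin n × Fin k, ∑ v : Fin n × Fin k,
              if rc2 n w v then 2*(x w)^2 else 0)
            ≤ ∑ w : Fin n × Fin k, 2*(2*(x w)^2) :=
              Finset.sum_le_sum fun w _ => cardb w _ (by positivity)
          _ = 4*s := by
              rw [hs_def, Finset.mul_sum]
              exact Finset.sum_congr rfl fun w _ => by ring
      calc (∑ v : Fin n × Fin k, ∑ w : Fin n × Fin k,
            if rc2 n v w then 2*(x v)^2 + 2*(x w)^2 else 0)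
          = (∑ v : Fin n × Fin k, ∑ w : Fin n × Fin k,
              if rc2 n v w then 2*(x v)^2 else 0)
            + (∑ v : Fin n × Fin k, ∑ w : Fin n × Fin k,
              if rc2 n v w then 2*(x w)^2 else 0) := by
            rw [← Finset.sum_add_distrib]
            refine Finset.sum_congr rfl fun v _ => ?_
            rw [← Finset.sum_add_distrib]
            exact Finset.sum_congr rfl fun w _ => by split <;> simp
        _ ≤ 4*s + 4*s := add_le_add hA hB
        _ = 8*s := by ring
    have hQle : 2 * (μ * s) ≤ 2*k*s + 8*s := by
      rw [h2D]
      calc (∑ v : Fin n × Fin k, ∑ w : Fin n × Fin k,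
            if (ringClique n k).Adj v w then (x v - x w)^2 else 0)
          ≤ ∑ v : Fin n × Fin k, ∑ w : Fin n × Fin k,
            ((if v.1 = w.1 then (x v - x w)^2 else 0)
              + (if rc2 n v w then 2*(x v)^2 + 2*(x w)^2 else 0)) :=
            Finset.sum_le_sum fun v _ => Finset.sum_le_sum fun w _ => hsplit v w
        _ = (∑ v : Fin n × Fin k, ∑ w : Fin n × Fin k,
              if v.1 = w.1 then (x v - x w)^2 else 0)
            + (∑ v : Fin n × Fin k, ∑ w : Fin n × Fin k,
              if rc2 n v w then 2*(x v)^2 + 2*(x w)^2 else 0) := by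
            rw [← Finset.sum_add_distrib]
            exact Finset.sum_congr rfl fun v _ => Finset.sum_add_distrib
        _ ≤ 2*k*s + 8*s := add_le_add hQ1 hQ2
    nlinarith [hs, hQle]
  exact ⟨le_csSup ⟨(k:ℝ)+4, fun μ hμ => hub μ hμ⟩ hkmem,
    csSup_le ⟨(k:ℝ), hkmem⟩ hub⟩
end

section
/- For all integers n ≥ 3 and k ≥ 2, the set of eigenvalues of the Laplacian of the ring-of-cliques graph is Λ(L(G_RC(n,k))) = {k} ∪ {θ₁(2 − 2cos(2πj/n)) : j = 0,…,n−1} ∪ {θ₂(2 − 2cos(2πj/n)) : j = 0,…,n−1}, where θ₁(λ) = (k+λ+√(λ²+2(k−2)λ+k²))/2 and θ₂(λ) = (k+λ−√(λ²+2(k−2)λ+k²))/2. -/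
open Matrix

/-- `θ₁(λ) = (k + λ + √(λ² + 2(k−2)λ + k²))/2`. -/
noncomputable def theta1 (k : ℕ) (lam : ℝ) : ℝ :=
  ((k : ℝ) + lam + Real.sqrt (lam ^ 2 + 2 * ((k : ℝ) - 2) * lam + (k : ℝ) ^ 2)) / 2

/-- `θ₂(λ) = (k + λ − √(λ² + 2(k−2)λ + k²))/2`. -/
noncomputable def theta2 (k : ℕ) (lam : ℝ) : ℝ :=
  ((k : ℝ) + lam - Real.sqrt (lam ^ 2 + 2 * ((k : ℝ) - 2) * lam + (k : ℝ) ^ 2)) / 2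

namespace RCAux

open Finset

def nxt {n : ℕ} (i : Fin n) : Fin n := ⟨(i.val + 1) % n, Nat.mod_lt _ i.pos⟩
def prv {n : ℕ} (i : Fin n) : Fin n := ⟨(i.val + (n - 1)) % n, Nat.mod_lt _ i.pos⟩

lemma prv_succ {n : ℕ} (i : Fin n) : ((prv i).val + 1) % n = i.val := by
  have h0 : 0 < n := i.pos
  show ((i.val + (n-1)) % n + 1) % n = i.val
  rw [Nat.mod_add_mod]
  have : i.val + (n - 1) + 1 = i.val + n := by omega
  rw [this, Nat.add_mod_right, Nat.mod_eq_of_lt i.isLt]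

lemma eq_prv {n : ℕ} {i j : Fin n} (h : i.val = (j.val + 1) % n) : j = prv i := by
  apply Fin.ext
  show j.val = (i.val + (n-1)) % n
  rw [h, Nat.mod_add_mod]
  have h0 : 0 < n := i.pos
  have : j.val + 1 + (n - 1) = j.val + n := by omega
  rw [this, Nat.add_mod_right, Nat.mod_eq_of_lt j.isLt]

lemma nxt_ne {n : ℕ} (hn : 3 ≤ n) (i : Fin n) : nxt i ≠ i := by
  intro h
  have h1 : (i.val + 1) % n = i.val := congrArg Fin.val h
  rcases Nat.lt_or_ge (i.val + 1) n with h2 | h2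
  · rw [Nat.mod_eq_of_lt h2] at h1; omega
  · have : i.val + 1 = n := by omega
    rw [this, Nat.mod_self] at h1
    omega

lemma prv_ne {n : ℕ} (hn : 3 ≤ n) (i : Fin n) : prv i ≠ i := by
  intro h
  apply nxt_ne hn i
  apply Fin.ext
  show (i.val + 1) % n = i.val
  conv_lhs => rw [← congrArg Fin.val h]
  exact prv_succ i

lemma nxt_ne_prv {n : ℕ} (hn : 3 ≤ n) (i : Fin n) : nxt i ≠ prv i := by
  intro h
  have h1 : ((nxt i).val + 1) % n = i.val := by rw [h]; exact prv_succ i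
  have h2 : ((i.val + 1) % n + 1) % n = i.val := h1
  rw [Nat.mod_add_mod] at h2
  rcases Nat.lt_or_ge (i.val + 1 + 1) n with h3 | h3
  · rw [Nat.mod_eq_of_lt h3] at h2; omega
  · have h4 : i.val + 1 + 1 - n < n := by have := i.isLt; omega
    have h5 : (i.val + 1 + 1) % n = i.val + 1 + 1 - n := by
      rw [Nat.mod_eq_sub_mod h3, Nat.mod_eq_of_lt h4]
    have := i.isLt
    omega

lemma sum_ite_const {ι : Type*} [Fintype ι] (P : Prop) [Decidable P] (g : ι → ℝ) :
    ∑ x : ι, (if P then g x else 0) = if P then ∑ x : ι, g x else 0 := by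
  split_ifs <;> simp

lemma sum_if_val {k : ℕ} (hk : 2 ≤ k) (A B : ℝ) :
    ∑ b : Fin k, (if b.val = 0 then A else B) = A + ((k:ℝ) - 1) * B := by
  have hz : ∀ b : Fin k, (if b.val = 0 then A else B)
      = B + (if b = (⟨0, by omega⟩ : Fin k) then A - B else 0) := by
    intro b
    by_cases hb : b.val = 0
    · rw [if_pos hb, if_pos (Fin.ext hb)]; ring
    · rw [if_neg hb, if_neg (fun h => hb (congrArg Fin.val h))]; ring
  rw [Finset.sum_congr rfl fun b _ => hz b, Finset.sum_add_distrib, Finset.sum_const,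
    Finset.sum_ite_eq' Finset.univ (⟨0, by omega⟩ : Fin k) (fun _ => A - B)]
  simp only [Finset.mem_univ, if_true, Finset.card_univ, Fintype.card_fin, nsmul_eq_mul]
  ring

variable {n k : ℕ}

lemma adj1 {a : Fin k} (ha : a.val ≠ 0) (i j : Fin n) (b : Fin k) :
    (ringClique n k).Adj (i, a) (j, b) ↔ j = i ∧ b ≠ a := by
  constructor
  · rintro ⟨hne, h | ⟨h0, -⟩⟩
    · exact ⟨h.symm, fun hba => hne (Prod.ext_iff.mpr ⟨h, hba.symm⟩)⟩
    · exact absurd h0 ha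
  · rintro ⟨rfl, hba⟩
    exact ⟨fun h => hba (congrArg Prod.snd h).symm, Or.inl rfl⟩

lemma adj0 (hn : 3 ≤ n) {a : Fin k} (ha : a.val = 0) (i j : Fin n) (b : Fin k) :
    (ringClique n k).Adj (i, a) (j, b) ↔
      (j = i ∧ b ≠ a) ∨ (b = a ∧ (j = nxt i ∨ j = prv i)) := by
  constructor
  · rintro ⟨hne, h | ⟨-, hb0, hring⟩⟩
    · exact Or.inl ⟨h.symm, fun hba => hne (Prod.ext_iff.mpr ⟨h, hba.symm⟩)⟩
    · have hba : b = a := Fin.ext (by rw [hb0, ha])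
      refine Or.inr ⟨hba, ?_⟩
      rcases hring with h | h
      · exact Or.inl (Fin.ext h)
      · exact Or.inr (eq_prv h)
  · rintro (⟨rfl, hba⟩ | ⟨rfl, h | h⟩)
    · exact ⟨fun h => hba (congrArg Prod.snd h).symm, Or.inl rfl⟩
    · subst h
      refine ⟨fun h => nxt_ne hn i (congrArg Prod.fst h).symm, Or.inr ⟨ha, ha, Or.inl rfl⟩⟩
    · subst h
      refine ⟨fun h => prv_ne hn i (congrArg Prod.fst h).symm,
        Or.inr ⟨ha, ha, Or.inr (prv_succ i).symm⟩⟩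

lemma sum1 {a : Fin k} (ha : a.val ≠ 0) (i : Fin n) (f : Fin n × Fin k → ℝ) :
    ∑ w : Fin n × Fin k, (if (ringClique n k).Adj (i, a) w then f w else 0)
      = (∑ b : Fin k, f (i, b)) - f (i, a) := by
  rw [Fintype.sum_prod_type]
  have h1 : ∀ (j : Fin n) (b : Fin k),
      (if (ringClique n k).Adj (i, a) (j, b) then f (j, b) else 0)
        = if j = i then (f (i, b) - if b = a then f (i, b) else 0) else 0 := by
    intro j b
    simp only [adj1 ha]
    by_cases hj : j = i <;> by_cases hb : b = a <;> simp [hj, hb]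
  have h2 : (∑ j : Fin n, ∑ b : Fin k,
      (if (ringClique n k).Adj (i, a) (j, b) then f (j, b) else 0))
      = ∑ j : Fin n, (if j = i then
          (∑ b : Fin k, (f (i, b) - if b = a then f (i, b) else 0)) else 0) := by
    refine Finset.sum_congr rfl fun j _ => ?_
    rw [← sum_ite_const (j = i)]
    exact Finset.sum_congr rfl fun b _ => h1 j b
  rw [h2, Finset.sum_ite_eq' Finset.univ i
    (fun _ => ∑ b : Fin k, (f (i, b) - if b = a then f (i, b) else 0))]
  simp only [Finset.mem_univ, if_true]
  rw [Finset.sum_sub_distrib, Finset.sum_ite_eq' Finset.univ a (fun b => f (i, b))]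
  simp

lemma sum0 (hn : 3 ≤ n) {a : Fin k} (ha : a.val = 0) (i : Fin n) (f : Fin n × Fin k → ℝ) :
    ∑ w : Fin n × Fin k, (if (ringClique n k).Adj (i, a) w then f w else 0)
      = ((∑ b : Fin k, f (i, b)) - f (i, a)) + f (nxt i, a) + f (prv i, a) := by
  rw [Fintype.sum_prod_type]
  have h1 : ∀ (j : Fin n) (b : Fin k),
      (if (ringClique n k).Adj (i, a) (j, b) then f (j, b) else 0)
        = (if j = i then (f (i, b) - if b = a then f (i, b) else 0) else 0)
          + (if b = a then ((if j = nxt i then f (j, b) else 0)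
              + (if j = prv i then f (j, b) else 0)) else 0) := by
    intro j b
    simp only [adj0 hn ha]
    have hnp := nxt_ne_prv hn i
    by_cases hj : j = i <;> by_cases hb : b = a <;>
      by_cases hjn : j = nxt i <;> by_cases hjp : j = prv i <;>
        simp_all [nxt_ne hn i, prv_ne hn i]
  have h2 : (∑ j : Fin n, ∑ b : Fin k,
      (if (ringClique n k).Adj (i, a) (j, b) then f (j, b) else 0))
      = ∑ j : Fin n,
          ((if j = i then
            (∑ b : Fin k, (f (i, b) - if b = a then f (i, b) else 0)) else 0)
          + ((if j = nxt i then f (j, a) else 0) + (if j = prv i then f (j, a) else 0))) := by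
    refine Finset.sum_congr rfl fun j _ => ?_
    have : (∑ b : Fin k,
        (if (ringClique n k).Adj (i, a) (j, b) then f (j, b) else 0))
        = ∑ b : Fin k,
          ((if j = i then (f (i, b) - if b = a then f (i, b) else 0) else 0)
          + (if b = a then ((if j = nxt i then f (j, b) else 0)
              + (if j = prv i then f (j, b) else 0)) else 0)) :=
      Finset.sum_congr rfl fun b _ => h1 j b
    rw [this, Finset.sum_add_distrib, sum_ite_const (j = i),
      Finset.sum_ite_eq' Finset.univ a (fun b => (if j = nxt i then f (j, b) else 0)
        + (if j = prv i then f (j, b) else 0))]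
    simp only [Finset.mem_univ, if_true]
  rw [h2, Finset.sum_add_distrib, Finset.sum_add_distrib,
    Finset.sum_ite_eq' Finset.univ i
      (fun _ => ∑ b : Fin k, (f (i, b) - if b = a then f (i, b) else 0)),
    Finset.sum_ite_eq' Finset.univ (nxt i) (fun j => f (j, a)),
    Finset.sum_ite_eq' Finset.univ (prv i) (fun j => f (j, a))]
  simp only [Finset.mem_univ, if_true]
  rw [Finset.sum_sub_distrib, Finset.sum_ite_eq' Finset.univ a (fun b => f (i, b))]
  simp
  ring

lemma lap1 (hk : 2 ≤ k) {a : Fin k} (ha : a.val ≠ 0) (i : Fin n) (x : Fin n × Fin k → ℝ) :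
    ((ringClique n k).lapMatrix ℝ *ᵥ x) (i, a) = k * x (i, a) - ∑ b : Fin k, x (i, b) := by
  rw [SimpleGraph.lapMatrix_mulVec_apply]
  have hdeg : ((ringClique n k).degree (i, a) : ℝ) = (k : ℝ) - 1 := by
    rw [SimpleGraph.degree_eq_sum_if_adj]
    rw [sum1 ha i (fun _ => (1 : ℝ))]
    simp
  have hnbr : ∑ u ∈ (ringClique n k).neighborFinset (i, a), x u
      = (∑ b : Fin k, x (i, b)) - x (i, a) := by
    rw [← sum1 ha i x]
    rw [SimpleGraph.neighborFinset_eq_filter, Finset.sum_filter]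
  rw [hdeg, hnbr]
  ring

lemma lap0 (hn : 3 ≤ n) (hk : 2 ≤ k) {a : Fin k} (ha : a.val = 0) (i : Fin n)
    (x : Fin n × Fin k → ℝ) :
    ((ringClique n k).lapMatrix ℝ *ᵥ x) (i, a)
      = ((k : ℝ) + 2) * x (i, a) - (∑ b : Fin k, x (i, b)) - x (nxt i, a) - x (prv i, a) := by
  rw [SimpleGraph.lapMatrix_mulVec_apply]
  have hdeg : ((ringClique n k).degree (i, a) : ℝ) = (k : ℝ) + 1 := by
    rw [SimpleGraph.degree_eq_sum_if_adj]
    rw [sum0 hn ha i (fun _ => (1 : ℝ))]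
    simp
  have hnbr : ∑ u ∈ (ringClique n k).neighborFinset (i, a), x u
      = ((∑ b : Fin k, x (i, b)) - x (i, a)) + x (nxt i, a) + x (prv i, a) := by
    rw [← sum0 hn ha i x]
    rw [SimpleGraph.neighborFinset_eq_filter, Finset.sum_filter]
  rw [hdeg, hnbr]
  ring

end RCAux

namespace RCAux

open Finset Complex ZMod
open scoped Real

lemma cycZ (n : ℕ) [NeZero n] (c : ℝ) (α : ZMod n → ℝ) (hα : α ≠ 0)
    (h : ∀ z : ZMod n, α (z + 1) + α (z - 1) = c * α z) :
    ∃ j : ZMod n, c = 2 * Real.cos (2 * Real.pi * j.val / n) := by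
  classical
  set Φ : ZMod n → ℂ := fun z => (α z : ℂ) with hΦdef
  have hΦ : Φ ≠ 0 := by
    intro h0
    apply hα
    funext z
    have := congrFun h0 z
    simpa [hΦdef] using this
  have hF : dft Φ ≠ 0 := fun h0 => hΦ ((LinearEquiv.map_eq_zero_iff _).mp h0)
  obtain ⟨j, hj⟩ := Function.ne_iff.mp hF
  simp only [Pi.zero_apply] at hj
  have e1 : ∑ z : ZMod n, stdAddChar (-(z * j)) * Φ (z + 1)
      = stdAddChar j * dft Φ j := by
    rw [dft_apply]
    rw [Fintype.sum_equiv (Equiv.addRight (1 : ZMod n))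
      (fun z => stdAddChar (-(z * j)) * Φ (z + 1))
      (fun z => stdAddChar j * (stdAddChar (-(z * j)) • Φ z))]
    · rw [← mul_sum]
    · intro z
      simp only [Equiv.coe_addRight, smul_eq_mul, ← mul_assoc]
      congr 1
      rw [← AddChar.map_add_eq_mul]
      congr 1
      ring
  have e2 : ∑ z : ZMod n, stdAddChar (-(z * j)) * Φ (z - 1)
      = stdAddChar (-j) * dft Φ j := by
    rw [dft_apply]
    rw [Fintype.sum_equiv (Equiv.subRight (1 : ZMod n))
      (fun z => stdAddChar (-(z * j)) * Φ (z - 1))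
      (fun z => stdAddChar (-j) * (stdAddChar (-(z * j)) • Φ z))]
    · rw [← mul_sum]
    · intro z
      simp only [Equiv.subRight_apply, smul_eq_mul, ← mul_assoc]
      congr 1
      rw [← AddChar.map_add_eq_mul]
      congr 1
      ring
  have key : (stdAddChar j + stdAddChar (-j)) * dft Φ j = (c : ℂ) * dft Φ j := by
    have hrec : ∀ z : ZMod n, Φ (z + 1) + Φ (z - 1) = (c : ℂ) * Φ z := by
      intro z
      have := h z
      push_cast [hΦdef]
      exact_mod_cast congrArg (fun r : ℝ => (r : ℂ)) this
    calc (stdAddChar j + stdAddChar (-j)) * dft Φ j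
        = ∑ z : ZMod n, stdAddChar (-(z * j)) * (Φ (z+1) + Φ (z-1)) := by
          rw [add_mul, ← e1, ← e2, ← sum_add_distrib]
          congr 1; funext z; ring
      _ = ∑ z : ZMod n, (c:ℂ) * (stdAddChar (-(z * j)) • Φ z) := by
          congr 1; funext z; rw [hrec z]; simp [smul_eq_mul]; ring
      _ = (c:ℂ) * dft Φ j := by rw [← mul_sum, dft_apply]
  have hsum : stdAddChar j + stdAddChar (-j) = (c : ℂ) := mul_right_cancel₀ hj key
  refine ⟨j, ?_⟩
  have hchar : (stdAddChar j : ℂ) = Complex.exp ((2 * Real.pi * j.val / n : ℝ) * I) := by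
    rw [ZMod.stdAddChar_apply, ZMod.toCircle_apply]
    push_cast
    ring_nf
  have hinv : (stdAddChar (-j) : ℂ) = Complex.exp (-((2 * Real.pi * j.val / n : ℝ) * I)) := by
    have hm : (stdAddChar j : ℂ) * stdAddChar (-j) = 1 := by
      rw [← AddChar.map_add_eq_mul]
      simp
    rw [Complex.exp_neg, ← hchar]
    exact eq_inv_of_mul_eq_one_left ((mul_comm _ _).trans hm)
  have hc : (c : ℂ) = 2 * Complex.cos ((2 * Real.pi * j.val / n : ℝ)) := by
    rw [← hsum, hchar, hinv, Complex.two_cos]; ring_nf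
  rw [← Complex.ofReal_cos] at hc
  exact_mod_cast hc

lemma cyc {n : ℕ} (hn : 3 ≤ n) (c : ℝ) (α : Fin n → ℝ) (hα : α ≠ 0)
    (h : ∀ i, α (nxt i) + α (prv i) = c * α i) :
    ∃ j : Fin n, c = 2 * Real.cos (2 * Real.pi * (j.val : ℝ) / n) := by
  haveI : NeZero n := ⟨by omega⟩
  haveI : Fact (1 < n) := ⟨by omega⟩
  set α' : ZMod n → ℝ := fun z => α ⟨z.val, z.val_lt⟩ with hα'
  have h1 : ∀ z : ZMod n, α' (z + 1) + α' (z - 1) = c * α' z := by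
    intro z
    have e1 : (⟨(z + 1).val, (z + 1).val_lt⟩ : Fin n) = nxt ⟨z.val, z.val_lt⟩ := by
      apply Fin.ext
      show (z + 1).val = (z.val + 1) % n
      rw [ZMod.val_add, ZMod.val_one]
    have e2 : (⟨(z - 1).val, (z - 1).val_lt⟩ : Fin n) = prv ⟨z.val, z.val_lt⟩ := by
      apply Fin.ext
      show (z - 1).val = (z.val + (n - 1)) % n
      have hz : z - 1 = z + ((n - 1 : ℕ) : ZMod n) := by
        have : ((n - 1 : ℕ) : ZMod n) = -1 := by
          rw [Nat.cast_sub (show 1 ≤ n by omega)]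
          simp
        rw [this]
        ring
      rw [hz, ZMod.val_add, ZMod.val_natCast, Nat.mod_eq_of_lt (show n - 1 < n by omega)]
    show α _ + α _ = c * α _
    rw [e1, e2]
    exact h _
  have hα'0 : α' ≠ 0 := by
    intro h0
    apply hα
    funext i
    have hfin : (⟨(((i.val : ℕ) : ZMod n)).val, ZMod.val_lt _⟩ : Fin n) = i := by
      apply Fin.ext
      show (((i.val : ℕ) : ZMod n)).val = i.val
      rw [ZMod.val_natCast, Nat.mod_eq_of_lt i.isLt]
    have := congrFun h0 ((i.val : ℕ) : ZMod n)
    rw [Pi.zero_apply] at this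
    exact (congrArg α hfin).symm.trans this
  obtain ⟨j, hj⟩ := cycZ n c α' hα'0 h1
  exact ⟨⟨j.val, j.val_lt⟩, hj⟩

lemma cos_mod (n : ℕ) (hn : 0 < n) (j m : ℕ) :
    Real.cos (2 * Real.pi * j * ((m % n : ℕ) : ℝ) / n) = Real.cos (2 * Real.pi * j * m / n) := by
  have hn' : (n : ℝ) ≠ 0 := Nat.cast_ne_zero.mpr hn.ne'
  set q := m / n with hq
  set r := m % n with hr
  have hm : n * q + r = m := Nat.div_add_mod m n
  rw [← hm]
  rw [show 2 * Real.pi * j * ((n * q + r : ℕ) : ℝ) / n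
      = 2 * Real.pi * j * (r : ℝ) / n + ((j * q : ℕ) : ℤ) * (2 * Real.pi) by
    push_cast; field_simp; ring]
  rw [Real.cos_add_int_mul_two_pi]

lemma trig {n : ℕ} (hn : 3 ≤ n) (j i : Fin n) :
    Real.cos (2 * Real.pi * (j.val : ℝ) * (((nxt i).val : ℕ) : ℝ) / n)
      + Real.cos (2 * Real.pi * (j.val : ℝ) * (((prv i).val : ℕ) : ℝ) / n)
    = 2 * Real.cos (2 * Real.pi * (j.val : ℝ) / n)
        * Real.cos (2 * Real.pi * (j.val : ℝ) * ((i.val : ℕ) : ℝ) / n) := by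
  have h0 : 0 < n := by omega
  have hn' : (n : ℝ) ≠ 0 := Nat.cast_ne_zero.mpr h0.ne'
  have e1 : Real.cos (2 * Real.pi * (j.val : ℝ) * (((nxt i).val : ℕ) : ℝ) / n)
      = Real.cos (2 * Real.pi * (j.val : ℝ) * ((i.val : ℕ) : ℝ) / n
          + 2 * Real.pi * (j.val : ℝ) / n) := by
    show Real.cos (2 * Real.pi * (j.val : ℝ) * (((i.val + 1) % n : ℕ) : ℝ) / n) = _
    rw [cos_mod n h0 j.val (i.val + 1)]
    congr 1
    push_cast
    field_simp
  have e2 : Real.cos (2 * Real.pi * (j.val : ℝ) * (((prv i).val : ℕ) : ℝ) / n)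
      = Real.cos (2 * Real.pi * (j.val : ℝ) * ((i.val : ℕ) : ℝ) / n
          - 2 * Real.pi * (j.val : ℝ) / n) := by
    show Real.cos (2 * Real.pi * (j.val : ℝ) * (((i.val + (n - 1)) % n : ℕ) : ℝ) / n) = _
    rw [cos_mod n h0 j.val (i.val + (n - 1))]
    rw [show 2 * Real.pi * (j.val : ℝ) * ((i.val + (n - 1) : ℕ) : ℝ) / n
        = (2 * Real.pi * (j.val : ℝ) * ((i.val : ℕ) : ℝ) / n
            - 2 * Real.pi * (j.val : ℝ) / n) + ((j.val : ℕ) : ℤ) * (2 * Real.pi) by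
      push_cast [Nat.cast_sub (show 1 ≤ n by omega)]
      field_simp
      ring]
    rw [Real.cos_add_int_mul_two_pi]
  rw [e1, e2, Real.cos_add, Real.cos_sub]
  ring

lemma quad_factor {k : ℕ} (hk : 2 ≤ k) {lam : ℝ} (hlam : 0 ≤ lam) (μ : ℝ) :
    μ ^ 2 - ((k : ℝ) + lam) * μ + lam = (μ - theta1 k lam) * (μ - theta2 k lam) := by
  have hk' : (2 : ℝ) ≤ (k : ℝ) := by exact_mod_cast hk
  have hD : 0 ≤ lam ^ 2 + 2 * ((k : ℝ) - 2) * lam + (k : ℝ) ^ 2 := by nlinarith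
  have hs := Real.sq_sqrt hD
  rw [theta1, theta2]
  linear_combination (1 / 4 : ℝ) * hs

lemma theta_mem {n k : ℕ} (hn : 3 ≤ n) (hk : 2 ≤ k) (j : Fin n) (θ : ℝ)
    (hθ : θ ^ 2 - ((k : ℝ) + (2 - 2 * Real.cos (2 * Real.pi * (j.val : ℝ) / n))) * θ
        + (2 - 2 * Real.cos (2 * Real.pi * (j.val : ℝ) / n)) = 0) :
    ∃ x : Fin n × Fin k → ℝ, x ≠ 0 ∧ ((ringClique n k).lapMatrix ℝ) *ᵥ x = θ • x := by
  set C : Fin n → ℝ := fun i => Real.cos (2 * Real.pi * (j.val : ℝ) * ((i.val : ℕ) : ℝ) / n)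
    with hC
  refine ⟨fun v => (if v.2.val = 0 then (1 - θ) else 1) * C v.1, ?_, ?_⟩
  · intro h0
    have h1 := congrFun h0 ((⟨0, by omega⟩ : Fin n), (⟨1, by omega⟩ : Fin k))
    simp only [Pi.zero_apply, hC] at h1
    norm_num at h1
  · funext v
    obtain ⟨i, a⟩ := v
    have hsum : ∑ b : Fin k, (if (b : Fin k).val = 0 then (1 - θ) else (1:ℝ)) * C i
        = ((1 - θ) + ((k:ℝ) - 1)) * C i := by
      rw [← Finset.sum_mul, sum_if_val hk]
      ring
    have hT := trig hn j i
    rw [Pi.smul_apply, smul_eq_mul]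
    by_cases ha : a.val = 0
    · rw [lap0 hn hk ha i _]
      simp only [ha, if_pos rfl, if_true]
      rw [hsum]
      show ((k:ℝ) + 2) * ((1 - θ) * C i) - ((1 - θ) + ((k:ℝ) - 1)) * C i
          - (if True then (1-θ) else 1) * C (nxt i) - (if True then (1-θ) else 1) * C (prv i)
          = θ * ((1 - θ) * C i)
      simp only [if_true]
      have hTT : C (nxt i) + C (prv i)
          = 2 * Real.cos (2 * Real.pi * (j.val : ℝ) / n) * C i := hT
      linear_combination (-(1 - θ)) * hTT + C i * hθ
    · rw [lap1 hk ha i _]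
      simp only [ha, if_false]
      rw [hsum]
      ring
end RCAux


theorem eigSet_ringClique (n k : ℕ) (hn : 3 ≤ n) (hk : 2 ≤ k) :
    eigSet ((ringClique n k).lapMatrix ℝ) =
      {(k : ℝ)} ∪
      (Set.range fun j : Fin n => theta1 k (2 - 2 * Real.cos (2 * Real.pi * j / n))) ∪
      (Set.range fun j : Fin n => theta2 k (2 - 2 * Real.cos (2 * Real.pi * j / n))) := by
  classical
  ext μ
  simp only [Set.mem_union, Set.mem_singleton_iff, Set.mem_range, eigSet, Set.mem_setOf_eq]
  constructor
  · rintro ⟨x, hx0, hx⟩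
    by_cases hμk : μ = (k : ℝ)
    · exact Or.inl (Or.inl hμk)
    have key : ∀ v, ((ringClique n k).lapMatrix ℝ *ᵥ x) v = μ * x v := by
      intro v
      have := congrFun hx v
      simpa using this
    set z : Fin k := ⟨0, by omega⟩ with hzdef
    have hzval : z.val = 0 := rfl
    set a1 : Fin k := ⟨1, by omega⟩ with ha1def
    have ha1 : a1.val ≠ 0 := by simp [ha1def]
    have E1 : ∀ (i : Fin n) (a : Fin k), a.val ≠ 0 →
        (k:ℝ) * x (i,a) - (∑ b : Fin k, x (i,b)) = μ * x (i,a) := by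
      intro i a ha
      rw [← RCAux.lap1 hk ha i x]
      exact key (i,a)
    have E2 : ∀ i : Fin n, ((k:ℝ)+2) * x (i,z) - (∑ b : Fin k, x (i,b))
        - x (RCAux.nxt i, z) - x (RCAux.prv i, z) = μ * x (i,z) := by
      intro i
      rw [← RCAux.lap0 hn hk hzval i x]
      exact key (i,z)
    have hkμ : (k:ℝ) - μ ≠ 0 := sub_ne_zero.mpr (Ne.symm hμk)
    set β : Fin n → ℝ := fun i => (∑ b : Fin k, x (i,b)) / ((k:ℝ) - μ) with hβdef
    have hβ : ∀ (i : Fin n) (a : Fin k), a.val ≠ 0 → x (i,a) = β i := by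
      intro i a ha
      have e := E1 i a ha
      show x (i,a) = (∑ b : Fin k, x (i,b)) / ((k:ℝ) - μ)
      rw [eq_div_iff hkμ]
      linear_combination e
    have hS : ∀ i : Fin n, (∑ b : Fin k, x (i,b)) = x (i,z) + ((k:ℝ)-1) * β i := by
      intro i
      have hb : ∀ b : Fin k, x (i,b) = (if b.val = 0 then x (i,z) else β i) := by
        intro b
        by_cases hbv : b.val = 0
        · rw [if_pos hbv]
          exact congrArg (fun t => x (i, t)) (Fin.ext hbv)
        · rw [if_neg hbv]
          exact hβ i b hbv
      rw [Finset.sum_congr rfl fun b _ => hb b, RCAux.sum_if_val hk]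
    have h1 : ∀ i : Fin n, (1-μ) * β i = x (i,z) := by
      intro i
      have e := E1 i a1 ha1
      rw [hβ i a1 ha1, hS i] at e
      linarith
    by_cases hμ1 : μ = 1
    · exfalso
      have hxz : ∀ i, x (i,z) = 0 := by
        intro i
        have := h1 i
        rw [hμ1] at this
        linarith
      have hk1 : (k:ℝ) - 1 ≠ 0 := by
        have : (2:ℝ) ≤ (k:ℝ) := by exact_mod_cast hk
        linarith
      have hβ0 : ∀ i, β i = 0 := by
        intro i
        have e := E2 i
        rw [hS i, hxz i, hxz _, hxz _] at e
        have h2 : ((k:ℝ)-1) * β i = 0 := by linarith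
        exact (mul_eq_zero.mp h2).resolve_left hk1
      apply hx0
      funext v
      obtain ⟨i,a⟩ := v
      show x (i,a) = 0
      by_cases ha : a.val = 0
      · have : a = z := Fin.ext ha
        rw [this]
        exact hxz i
      · rw [hβ i a ha]
        exact hβ0 i
    have h1μ : (1:ℝ) - μ ≠ 0 := sub_ne_zero.mpr (Ne.symm hμ1)
    have hα : (fun i : Fin n => x (i,z)) ≠ 0 := by
      intro h0
      apply hx0
      funext v
      obtain ⟨i,a⟩ := v
      show x (i,a) = 0
      have hzi : x (i,z) = 0 := congrFun h0 i
      have hβ0 : β i = 0 := by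
        have := h1 i
        rw [hzi] at this
        exact (mul_eq_zero.mp this).resolve_left h1μ
      by_cases ha : a.val = 0
      · have : a = z := Fin.ext ha
        rw [this]
        exact hzi
      · rw [hβ i a ha]
        exact hβ0
    set c : ℝ := ((k:ℝ)+1-μ) - ((k:ℝ)-1)/(1-μ) with hcdef
    have hrec : ∀ i : Fin n, x (RCAux.nxt i, z) + x (RCAux.prv i, z) = c * x (i,z) := by
      intro i
      have e := E2 i
      rw [hS i] at e
      have hβi : β i = x (i,z) / (1-μ) := by
        rw [eq_div_iff h1μ, mul_comm]
        exact h1 i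
      rw [hβi] at e
      show _ = (((k:ℝ)+1-μ) - ((k:ℝ)-1)/(1-μ)) * x (i,z)
      field_simp at e ⊢
      linarith
    obtain ⟨j, hj⟩ := RCAux.cyc hn c _ hα hrec
    have hlam0 : (0:ℝ) ≤ 2 - 2 * Real.cos (2 * Real.pi * (j.val:ℝ) / n) := by
      nlinarith [Real.cos_le_one (2 * Real.pi * (j.val:ℝ) / n)]
    have hquad : μ^2 - ((k:ℝ) + (2 - 2 * Real.cos (2 * Real.pi * (j.val:ℝ) / n))) * μ
        + (2 - 2 * Real.cos (2 * Real.pi * (j.val:ℝ) / n)) = 0 := by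
      have e : ((k:ℝ)+1-μ) - ((k:ℝ)-1)/(1-μ) = 2 * Real.cos (2 * Real.pi * (j.val:ℝ) / n) := by
        rw [← hcdef]
        exact hj
      field_simp at e
      linear_combination e
    rw [RCAux.quad_factor hk hlam0 μ] at hquad
    rcases mul_eq_zero.mp hquad with h | h
    · exact Or.inl (Or.inr ⟨j, (sub_eq_zero.mp h).symm⟩)
    · exact Or.inr ⟨j, (sub_eq_zero.mp h).symm⟩
  · rintro ((hμ | ⟨j, rfl⟩) | ⟨j, rfl⟩)
    · subst hμ
      refine RCAux.theta_mem hn hk ⟨0, by omega⟩ (k:ℝ) ?_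
      norm_num
      ring
    · refine RCAux.theta_mem hn hk j _ ?_
      have hlam0 : (0:ℝ) ≤ 2 - 2 * Real.cos (2 * Real.pi * (j.val:ℝ) / n) := by
        nlinarith [Real.cos_le_one (2 * Real.pi * (j.val:ℝ) / n)]
      rw [RCAux.quad_factor hk hlam0]
      ring
    · refine RCAux.theta_mem hn hk j _ ?_
      have hlam0 : (0:ℝ) ≤ 2 - 2 * Real.cos (2 * Real.pi * (j.val:ℝ) / n) := by
        nlinarith [Real.cos_le_one (2 * Real.pi * (j.val:ℝ) / n)]
      rw [RCAux.quad_factor hk hlam0]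
      ring
end
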